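/- arXiv:1401.2419 — 6 statements merged into one kernel-verified Lean document; each statement's English description precedes it below -/
import Mathlib

section
/- Let d ≥ 2 be an integer, t > 0, and 0 < t₀ < t_{0,crit}. Let r be the unique number in (0, r_crit) with t₀ = r² − d·t²·r^{2d}, set a = t·r^d, ψ(w) = r·w + a·w^{−d}, and ψ′(w) = r − d·a·w^{−(d+1)}. Then for every integer k ≥ 0: (1/(2π)) ∫_0^{2π} ψ(e^{−iθ}) · ψ(e^{iθ})^{−k} · ψ′(e^{iθ}) · e^{iθ} dθ equals t₀ if k = 0, equals t if k = d + 1, and equals 0 for every other k. (This is the parametrized form of the harmonic-moment identities (1/(2πi)) ∮_{∂Ω} z̄·z^{−k} dz for the Laplacian-growth domain Ω whose boundary is the curve ψ({|w| = 1}); the conjugate z̄ equals ψ(e^{−iθ}) because ψ has real coefficients.) -/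
open Complex MeasureTheory

/-- The map `ψ(w) = r·w + t·r^d·w^{-d}`. -/
noncomputable def psi (d : ℕ) (r t : ℝ) (w : ℂ) : ℂ :=
  (r : ℂ) * w + (t : ℂ) * (r : ℂ) ^ d / w ^ d

/-- The derivative `ψ'(w) = r - d·t·r^d·w^{-(d+1)}`. -/
noncomputable def psi' (d : ℕ) (r t : ℝ) (w : ℂ) : ℂ :=
  (r : ℂ) - (d : ℂ) * (t : ℂ) * (r : ℂ) ^ d / w ^ (d + 1)

/-- The integrand of the harmonic moment integral. -/
noncomputable def Jf (d k : ℕ) (r t : ℝ) (θ : ℝ) : ℂ :=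
  psi d r t (Complex.exp (-(θ : ℂ) * Complex.I))
    * psi d r t (Complex.exp ((θ : ℂ) * Complex.I)) ^ (-(k : ℤ))
    * psi' d r t (Complex.exp ((θ : ℂ) * Complex.I))
    * Complex.exp ((θ : ℂ) * Complex.I)

lemma har_lemma (d : ℕ) (hd : 2 ≤ d) (t r : ℝ) (ht : 0 < t) (hr : 0 < r)
    (hrcrit : r < ((d : ℝ) * t) ^ (-1 / ((d : ℝ) - 1))) : t * r ^ d < r := by
  have hd0 : (0:ℝ) < d := by positivity
  have hdt : (0:ℝ) < (d:ℝ) * t := by positivity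
  have hd1 : ((d:ℝ) - 1) ≠ 0 := by
    have : (2:ℝ) ≤ d := by exact_mod_cast hd
    linarith
  have hsub : ((d - 1 : ℕ) : ℝ) = (d:ℝ) - 1 := by
    push_cast [Nat.cast_sub (by omega : 1 ≤ d)]; ring
  have key : r ^ (d - 1) < ((d:ℝ) * t)⁻¹ := by
    have h1 : r ^ (d-1) < (((d:ℝ) * t) ^ (-1 / ((d : ℝ) - 1))) ^ (d - 1) :=
      pow_lt_pow_left₀ hrcrit hr.le (by omega)
    have h2 : (((d:ℝ) * t) ^ (-1 / ((d : ℝ) - 1))) ^ (d - 1 : ℕ)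
        = ((d:ℝ) * t) ^ ((-1 / ((d : ℝ) - 1)) * ((d:ℝ) - 1)) := by
      rw [← Real.rpow_natCast (((d:ℝ) * t) ^ (-1 / ((d : ℝ) - 1))) (d-1), ← Real.rpow_mul hdt.le,
        hsub]
    rw [h2] at h1
    have h3 : (-1 / ((d : ℝ) - 1)) * ((d:ℝ) - 1) = -1 := by field_simp
    rwa [h3, Real.rpow_neg_one] at h1
  have h4 : t * r ^ (d - 1) < (d:ℝ)⁻¹ := by
    calc t * r ^ (d-1) < t * ((d:ℝ) * t)⁻¹ := by
          exact mul_lt_mul_of_pos_left key ht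
      _ = (d:ℝ)⁻¹ := by field_simp
  have h5 : t * r ^ (d-1) < 1 := lt_of_lt_of_le h4 (by
    rw [inv_le_one_iff₀]; right; exact_mod_cast Nat.one_le_iff_ne_zero.mpr (by omega))
  calc t * r ^ d = (t * r ^ (d-1)) * r := by
        rw [mul_assoc, ← pow_succ]; congr 2; omega
    _ < 1 * r := by exact mul_lt_mul_of_pos_right h5 hr
    _ = r := one_mul r

lemma den_ne (d : ℕ) (r t : ℝ) (ht : 0 < t) (hr : 0 < r) (har : t * r ^ d < r)
    (z : ℂ) (hz : ‖z‖ ≤ 1) :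
    (r : ℂ) + (t : ℂ) * (r : ℂ) ^ d * z ^ (d + 1) ≠ 0 := by
  intro h
  have h1 : (r : ℂ) = -((t : ℂ) * (r : ℂ) ^ d * z ^ (d + 1)) := by linear_combination h
  have h2 := congrArg (‖·‖) h1
  simp only [norm_neg, norm_mul, norm_pow, Complex.norm_real, Real.norm_eq_abs,
    abs_of_pos hr, abs_of_pos ht] at h2
  have h3 : ‖z‖ ^ (d+1) ≤ 1 := pow_le_one₀ (norm_nonneg z) hz
  nlinarith [pow_pos hr d, mul_pos ht (pow_pos hr d)]

lemma psi_ne (d : ℕ) (r t : ℝ) (ht : 0 < t) (hr : 0 < r) (har : t * r ^ d < r)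
    (w : ℂ) (hw : ‖w‖ = 1) : psi d r t w ≠ 0 := by
  intro h
  have hw0 : w ≠ 0 := by intro h0; rw [h0] at hw; simp at hw
  have h1 : (r : ℂ) * w = -((t : ℂ) * (r : ℂ) ^ d / w ^ d) := by
    unfold psi at h; linear_combination h
  have h2 := congrArg (‖·‖) h1
  simp only [norm_neg, norm_mul, norm_div, norm_pow, Complex.norm_real, Real.norm_eq_abs, hw,
    abs_of_pos hr, abs_of_pos ht, one_pow, mul_one, div_one] at h2
  linarith

lemma contJ (d k : ℕ) (r t : ℝ) (ht : 0 < t) (hr : 0 < r) (har : t * r ^ d < r) :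
    Continuous (Jf d k r t) := by
  have he : Continuous fun θ : ℝ => Complex.exp ((θ:ℂ) * I) :=
    (Complex.continuous_ofReal.mul continuous_const).cexp
  have hne : Continuous fun θ : ℝ => Complex.exp (-(θ:ℂ) * I) :=
    ((Complex.continuous_ofReal.neg).mul continuous_const).cexp
  have hpsi : ∀ (e : ℝ → ℂ), Continuous e → (∀ θ, e θ ≠ 0) →
      Continuous fun θ => psi d r t (e θ) := by
    intro e hcont h0
    unfold psi
    exact (continuous_const.mul hcont).add
      (continuous_const.div (hcont.pow d) fun θ => pow_ne_zero _ (h0 θ))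
  have hpsi' : Continuous fun θ : ℝ => psi' d r t (Complex.exp ((θ:ℂ) * I)) := by
    unfold psi'
    exact continuous_const.sub
      (continuous_const.div (he.pow (d+1)) fun θ => pow_ne_zero _ (Complex.exp_ne_zero _))
  have habs : ∀ θ : ℝ, ‖Complex.exp ((θ:ℂ) * I)‖ = 1 := fun θ =>
    Complex.norm_exp_ofReal_mul_I θ
  have hz : Continuous fun θ : ℝ => psi d r t (Complex.exp ((θ:ℂ) * I)) ^ (-(k : ℤ)) :=
    Continuous.zpow₀ (hpsi _ he fun θ => Complex.exp_ne_zero _) _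
      (fun θ => Or.inl (psi_ne d r t ht hr har _ (habs θ)))
  exact (((hpsi _ hne fun θ => Complex.exp_ne_zero _).mul hz).mul hpsi').mul he

lemma exp_per (θ : ℝ) : Complex.exp ((↑(θ + 2*Real.pi)) * I) = Complex.exp ((θ:ℂ) * I) := by
  push_cast
  rw [add_mul, Complex.exp_add, Complex.exp_two_pi_mul_I, mul_one]

lemma exp_per' (θ : ℝ) : Complex.exp (-(↑(θ + 2*Real.pi)) * I) = Complex.exp (-(θ:ℂ) * I) := by
  push_cast
  have : -((θ:ℂ) + 2*Real.pi) * I = -(θ:ℂ)*I + -(2*(Real.pi:ℂ)*I) := by ring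
  rw [this, Complex.exp_add, Complex.exp_neg, Complex.exp_two_pi_mul_I, inv_one, mul_one]

lemma Jf_per (d k : ℕ) (r t : ℝ) (θ : ℝ) : Jf d k r t (θ + 2*Real.pi) = Jf d k r t θ := by
  unfold Jf; rw [exp_per, exp_per']

lemma shift_int (f : ℝ → ℂ) (hc : Continuous f)
    (hper : ∀ θ, f (θ + 2*Real.pi) = f θ) (s : ℝ) :
    ∫ θ in (0:ℝ)..(2*Real.pi), f (θ + s) = ∫ θ in (0:ℝ)..(2*Real.pi), f θ := by
  have hii : ∀ a b : ℝ, IntervalIntegrable f MeasureTheory.volume a b := fun a b =>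
    hc.intervalIntegrable a b
  rw [intervalIntegral.integral_comp_add_right]
  have h1 : ∫ θ in (2*Real.pi)..(2*Real.pi+s), f θ = ∫ θ in (0:ℝ)..s, f θ := by
    have := intervalIntegral.integral_comp_add_right (a := (0:ℝ)) (b := s) (f := f) (2*Real.pi)
    rw [zero_add, add_comm s] at this
    rw [← this]
    simp only [hper]
  have h2 := intervalIntegral.integral_add_adjacent_intervals (a := 0+s) (b := 2*Real.pi)
    (c := 2*Real.pi + s) (f := f) (hii _ _) (hii _ _)
  have h3 := intervalIntegral.integral_add_adjacent_intervals (a := 0) (b := s)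
    (c := 2*Real.pi) (f := f) (hii _ _) (hii _ _)
  rw [zero_add] at h2 ⊢
  rw [← h2, h1]
  rw [← h3]
  ring

lemma psi_root_mul (d : ℕ) (r t : ℝ) (ξ w : ℂ) (hξ : ξ^(d+1) = 1) (hw : w ≠ 0) :
    psi d r t (ξ * w) = ξ * psi d r t w := by
  have hξ0 : ξ ≠ 0 := by
    intro h; rw [h, zero_pow (by omega : d + 1 ≠ 0)] at hξ; exact zero_ne_one hξ
  have h : ξ ^ d = ξ⁻¹ := eq_inv_of_mul_eq_one_left (by rw [← pow_succ]; exact hξ)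
  unfold psi
  rw [mul_pow, h]
  field_simp

lemma psi'_root (d : ℕ) (r t : ℝ) (ξ w : ℂ) (hξ : ξ^(d+1) = 1) :
    psi' d r t (ξ * w) = psi' d r t w := by
  unfold psi'; rw [mul_pow, hξ, one_mul]

lemma caseD (d k : ℕ) (hd : 2 ≤ d) (r t : ℝ) (ht : 0 < t) (hr : 0 < r)
    (har : t * r ^ d < r) (hk : ¬ (d+1) ∣ k) :
    ∫ θ in (0:ℝ)..(2*Real.pi), Jf d k r t θ = 0 := by
  set ζ : ℂ := Complex.exp (2 * (Real.pi : ℂ) * I / ((d:ℕ)+1 : ℕ)) with hζdef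
  have hprim : IsPrimitiveRoot ζ (d+1) := by
    have := Complex.isPrimitiveRoot_exp (d+1) (by omega)
    simpa [hζdef] using this
  have hζ1 : ζ ^ (d+1) = 1 := hprim.pow_eq_one
  have hζk : ζ ^ k ≠ 1 := fun h => hk ((hprim.pow_eq_one_iff_dvd k).mp h)
  have hζ0 : ζ ≠ 0 := Complex.exp_ne_zero _
  have hξinv : (ζ⁻¹) ^ (d+1) = 1 := by rw [inv_pow, hζ1, inv_one]
  set s : ℝ := 2 * Real.pi / ((d:ℝ)+1) with hsdef
  have hes : Complex.exp ((s:ℂ) * I) = ζ := by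
    rw [hζdef, hsdef]
    congr 1
    have hne : ((d:ℂ) + 1) ≠ 0 := by
      exact_mod_cast (Nat.cast_ne_zero (R := ℂ)).mpr (Nat.succ_ne_zero d)
    push_cast
    field_simp
  have pointwise : ∀ θ : ℝ, Jf d k r t (θ + s) = (ζ^k)⁻¹ * Jf d k r t θ := by
    intro θ
    set w : ℂ := Complex.exp ((θ:ℂ) * I) with hwdef
    have hw0 : w ≠ 0 := Complex.exp_ne_zero _
    have he1 : Complex.exp ((↑(θ+s):ℂ) * I) = ζ * w := by
      have h : (↑(θ+s):ℂ) * I = (s:ℂ)*I + (θ:ℂ)*I := by push_cast; ring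
      rw [h, Complex.exp_add, hes]
    have he2 : Complex.exp (-(↑(θ+s):ℂ) * I) = (ζ * w)⁻¹ := by
      have h : -(↑(θ+s):ℂ) * I = -((↑(θ+s):ℂ) * I) := by ring
      rw [h, Complex.exp_neg, he1]
    have hw2 : Complex.exp (-(θ:ℂ) * I) = w⁻¹ := by
      have h : -(θ:ℂ) * I = -((θ:ℂ) * I) := by ring
      rw [h, Complex.exp_neg]
    unfold Jf
    rw [he1, he2, hw2, mul_inv,
      psi_root_mul d r t ζ⁻¹ w⁻¹ hξinv (inv_ne_zero hw0),
      psi_root_mul d r t ζ w hζ1 hw0, psi'_root d r t ζ w hζ1]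
    simp only [mul_zpow, zpow_neg, zpow_natCast]
    linear_combination (psi d r t w⁻¹ * (ζ^k)⁻¹ * ((psi d r t w)^k)⁻¹ * psi' d r t w * w) *
      mul_inv_cancel₀ hζ0
  have h1 : ∫ θ in (0:ℝ)..(2*Real.pi), Jf d k r t (θ + s)
      = ∫ θ in (0:ℝ)..(2*Real.pi), Jf d k r t θ :=
    shift_int _ (contJ d k r t ht hr har) (Jf_per d k r t) s
  have h2 : ∫ θ in (0:ℝ)..(2*Real.pi), Jf d k r t (θ + s)
      = (ζ^k)⁻¹ * ∫ θ in (0:ℝ)..(2*Real.pi), Jf d k r t θ := by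
    simp only [pointwise]
    rw [intervalIntegral.integral_const_mul]
  have h3 : (1 - (ζ^k)⁻¹) * ∫ θ in (0:ℝ)..(2*Real.pi), Jf d k r t θ = 0 := by
    rw [sub_mul, one_mul]
    rw [h1] at h2
    linear_combination h2
  rcases mul_eq_zero.mp h3 with h | h
  · exfalso
    apply hζk
    have : (ζ^k)⁻¹ = 1 := by linear_combination -h
    rw [← inv_inv (ζ^k), this, inv_one]
  · exact h

/-- Auxiliary holomorphic function for the Cauchy-formula cases. -/
noncomputable def Hf (d k : ℕ) (r t : ℝ) (m : ℕ) (z : ℂ) : ℂ :=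
  z ^ m * (((r:ℂ) * z^(d+1) + (t:ℂ)*(r:ℂ)^d) * ((r:ℂ) - (d:ℂ)*((t:ℂ)*(r:ℂ)^d)*z^(d+1))
    / ((r:ℂ) + (t:ℂ)*(r:ℂ)^d*z^(d+1))^k)

lemma pointwiseE (d k : ℕ) (hd : 2 ≤ d) (r t : ℝ) (ht : 0 < t) (hr : 0 < r)
    (har : t * r ^ d < r) (m : ℕ) (hk : k = d + 1 + m) (θ : ℝ) :
    Jf d k r t θ = Hf d k r t m (Complex.exp (-(θ:ℂ) * I)) := by
  set v : ℂ := Complex.exp (-(θ:ℂ) * I) with hvdef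
  have hv0 : v ≠ 0 := Complex.exp_ne_zero _
  have hvabs : ‖v‖ = 1 := by
    rw [hvdef]
    have : -(θ:ℂ) * I = (↑(-θ):ℂ) * I := by push_cast; ring
    rw [this, Complex.norm_exp_ofReal_mul_I]
  have hw : Complex.exp ((θ:ℂ) * I) = v⁻¹ := by
    rw [hvdef, ← Complex.exp_neg]
    congr 1; ring
  have hden : (r : ℂ) + (t : ℂ) * (r : ℂ) ^ d * v ^ (d + 1) ≠ 0 :=
    den_ne d r t ht hr har v hvabs.le
  have hdenk : ((r : ℂ) + (t : ℂ) * (r : ℂ) ^ d * v ^ (d + 1)) ^ k ≠ 0 := pow_ne_zero _ hden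
  have hzp : psi d r t v⁻¹ ^ (-(k : ℤ))
      = v ^ k / ((r : ℂ) + (t : ℂ) * (r : ℂ) ^ d * v ^ (d + 1)) ^ k := by
    have h1 : psi d r t v⁻¹ = ((r : ℂ) + (t : ℂ) * (r : ℂ) ^ d * v ^ (d + 1)) / v := by
      unfold psi
      rw [inv_pow]
      field_simp
      ring
    rw [h1, zpow_neg, zpow_natCast, div_pow, inv_div]
  unfold Jf Hf
  rw [hw, hzp]
  unfold psi psi'
  rw [← hvdef, inv_pow]
  subst hk
  field_simp
  ring

lemma flip_int (G : ℂ → ℂ) :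
    ∫ θ in (0:ℝ)..(2*Real.pi), G (Complex.exp (-(θ:ℂ) * I))
      = ∫ θ in (0:ℝ)..(2*Real.pi), G (Complex.exp ((θ:ℂ) * I)) := by
  have h0 : ∀ θ : ℝ, G (Complex.exp (-(θ:ℂ) * I)) = G (Complex.exp ((↑(-θ):ℂ) * I)) := by
    intro θ; congr 2; push_cast; ring
  simp only [h0]
  rw [intervalIntegral.integral_comp_neg (fun θ : ℝ => G (Complex.exp ((θ:ℂ) * I)))]
  have h1 : ∀ x : ℝ, G (Complex.exp ((↑(x - 2*Real.pi):ℂ) * I)) = G (Complex.exp ((x:ℂ) * I)) := by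
    intro x
    congr 1
    push_cast
    rw [sub_mul, Complex.exp_sub, Complex.exp_two_pi_mul_I, div_one]
  have h2 := intervalIntegral.integral_comp_sub_right (a := (0:ℝ)) (b := 2*Real.pi)
    (fun θ : ℝ => G (Complex.exp ((θ:ℂ) * I))) (2*Real.pi)
  simp only [h1] at h2
  norm_num at h2 ⊢
  exact h2.symm

lemma cauchyE (d k : ℕ) (hd : 2 ≤ d) (r t : ℝ) (ht : 0 < t) (hr : 0 < r)
    (har : t * r ^ d < r) (m : ℕ) :
    ∫ θ in (0:ℝ)..(2*Real.pi), Hf d k r t m (Complex.exp ((θ:ℂ) * I))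
      = 2 * Real.pi * (if m = 0 then ((t:ℂ) * (r:ℂ)^d * r / (r:ℂ)^k) else 0) := by
  have HD : DifferentiableOn ℂ (Hf d k r t m) (Metric.closedBall 0 1) := by
    apply DifferentiableOn.mul
    · exact (differentiable_pow m).differentiableOn
    · apply DifferentiableOn.div
      · apply DifferentiableOn.mul <;> apply Differentiable.differentiableOn
        · exact (differentiable_const _ |>.mul (differentiable_pow _)).add (differentiable_const _)
        · exact (differentiable_const _).sub ((differentiable_const _).mul (differentiable_pow _))
      · exact (Differentiable.differentiableOn ((differentiable_const _).add
          ((differentiable_const _).mul (differentiable_pow _)))).pow k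
      · intro z hz
        apply pow_ne_zero
        apply den_ne d r t ht hr har
        rw [← mem_closedBall_zero_iff]
        exact hz
  have hc := HD.circleIntegral_sub_inv_smul (w := 0) (by simp)
  have hunf : (∮ z in C((0:ℂ), 1), (z - 0)⁻¹ • Hf d k r t m z)
      = I * ∫ θ in (0:ℝ)..(2*Real.pi), Hf d k r t m (Complex.exp ((θ:ℂ) * I)) := by
    rw [circleIntegral, ← intervalIntegral.integral_const_mul]
    apply intervalIntegral.integral_congr
    intro θ _
    have hcm : circleMap 0 1 θ = Complex.exp ((θ:ℂ) * I) := by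
      rw [circleMap_zero]; norm_num
    simp only [deriv_circleMap, hcm, smul_eq_mul, sub_zero]
    field_simp [Complex.exp_ne_zero]
  rw [hunf] at hc
  have hH0 : Hf d k r t m 0 = if m = 0 then ((t:ℂ) * (r:ℂ)^d * r / (r:ℂ)^k) else 0 := by
    unfold Hf
    rcases Nat.eq_zero_or_pos m with hm | hm
    · subst hm
      simp [zero_pow (by omega : d + 1 ≠ 0)]
    · rw [if_neg (by omega), zero_pow (by omega : m ≠ 0), zero_mul]
  have hIne : (I : ℂ) ≠ 0 := Complex.I_ne_zero
  have := hc
  rw [smul_eq_mul] at this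
  have h2 : I * ∫ θ in (0:ℝ)..(2*Real.pi), Hf d k r t m (Complex.exp ((θ:ℂ) * I))
      = I * (2 * Real.pi * Hf d k r t m 0) := by
    rw [this]; ring
  have h3 := mul_left_cancel₀ hIne h2
  rw [h3, hH0]

lemma caseC (d : ℕ) (hd : 2 ≤ d) (r t : ℝ) :
    ∫ θ in (0:ℝ)..(2*Real.pi), Jf d 0 r t θ
      = 2 * Real.pi * ((r:ℂ)^2 - (d:ℂ)*(t:ℂ)^2*(r:ℂ)^(2*d)) := by
  set c : ℂ := ((d+1 : ℕ) : ℂ) * I with hcdef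
  have hc0 : c ≠ 0 := by
    rw [hcdef]
    exact mul_ne_zero (Nat.cast_ne_zero.mpr (by omega)) Complex.I_ne_zero
  have pointwise : ∀ θ : ℝ, Jf d 0 r t θ
      = ((r:ℂ)^2 - (d:ℂ)*(t:ℂ)^2*(r:ℂ)^(2*d))
        + ((t:ℂ)*(r:ℂ)^(d+1)) * Complex.exp (c * (θ:ℝ))
        - ((d:ℂ)*(t:ℂ)*(r:ℂ)^(d+1)) * Complex.exp (-c * (θ:ℝ)) := by
    intro θ
    set w : ℂ := Complex.exp ((θ:ℂ) * I) with hwdef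
    have hw0 : w ≠ 0 := Complex.exp_ne_zero _
    have hv : Complex.exp (-(θ:ℂ) * I) = w⁻¹ := by
      rw [hwdef, ← Complex.exp_neg]; congr 1; ring
    have h1 : Complex.exp (c * (θ:ℝ)) = w ^ (d+1) := by
      rw [hwdef, ← Complex.exp_nat_mul]
      congr 1
      rw [hcdef]; push_cast; ring
    have h2 : Complex.exp (-c * (θ:ℝ)) = (w ^ (d+1))⁻¹ := by
      rw [← h1, ← Complex.exp_neg]; congr 1; ring
    unfold Jf psi psi'
    rw [hv, h1, h2]
    simp only [Nat.cast_zero, neg_zero, zpow_zero, mul_one]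
    rw [inv_pow]
    field_simp
    ring
  rw [intervalIntegral.integral_congr (g := fun θ : ℝ =>
      ((r:ℂ)^2 - (d:ℂ)*(t:ℂ)^2*(r:ℂ)^(2*d))
        + ((t:ℂ)*(r:ℂ)^(d+1)) * Complex.exp (c * (θ:ℝ))
        - ((d:ℂ)*(t:ℂ)*(r:ℂ)^(d+1)) * Complex.exp (-c * (θ:ℝ)))
    (fun θ _ => pointwise θ)]
  have hcont1 : Continuous fun θ : ℝ => Complex.exp (c * (θ:ℝ)) :=
    (continuous_const.mul Complex.continuous_ofReal).cexp
  have hcont2 : Continuous fun θ : ℝ => Complex.exp (-c * (θ:ℝ)) :=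
    (continuous_const.mul Complex.continuous_ofReal).cexp
  rw [intervalIntegral.integral_sub, intervalIntegral.integral_add]
  · rw [intervalIntegral.integral_const_mul, intervalIntegral.integral_const_mul,
      integral_exp_mul_complex hc0, integral_exp_mul_complex (neg_ne_zero.mpr hc0),
      intervalIntegral.integral_const]
    have he1 : Complex.exp (c * (2*Real.pi:ℝ)) = 1 := by
      have := Complex.exp_nat_mul (2*(Real.pi:ℂ)*I) (d+1)
      rw [Complex.exp_two_pi_mul_I, one_pow] at this
      rw [← this]
      congr 1
      rw [hcdef]; push_cast; ring
    have he2 : Complex.exp (-c * ((2*Real.pi:ℝ):ℂ)) = 1 := by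
      rw [show (-c * ((2*Real.pi:ℝ):ℂ)) = -(c * ((2*Real.pi:ℝ):ℂ)) by ring, Complex.exp_neg,
        he1, inv_one]
    rw [he1, he2]
    simp only [Complex.ofReal_zero, mul_zero, neg_zero, Complex.exp_zero, sub_self, zero_div,
      mul_zero, sub_zero, add_zero, Complex.real_smul]
    push_cast
    ring
  · exact (continuous_const.intervalIntegrable _ _)
  · exact ((continuous_const.mul hcont1).intervalIntegrable _ _)
  · exact ((continuous_const.add (continuous_const.mul hcont1)).intervalIntegrable _ _)
  · exact ((continuous_const.mul hcont2).intervalIntegrable _ _)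

/-- Harmonic moment identities for the Laplacian growth domain bounded by `ψ({|w|=1})`:
`(1/2π) ∫_0^{2π} ψ(e^{-iθ}) ψ(e^{iθ})^{-k} ψ'(e^{iθ}) e^{iθ} dθ` equals `t₀` for `k = 0`,
`t` for `k = d+1`, and `0` otherwise. -/
theorem stmt1 (d : ℕ) (hd : 2 ≤ d) (t t₀ r : ℝ)
    (ht : 0 < t) (ht₀pos : 0 < t₀)
    (ht₀crit : t₀ < ((d : ℝ) ^ (-2 / ((d : ℝ) - 1)) - (d : ℝ) ^ (-((d : ℝ) + 1) / ((d : ℝ) - 1)))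
        * t ^ (-2 / ((d : ℝ) - 1)))
    (hrpos : 0 < r)
    (hrcrit : r < ((d : ℝ) * t) ^ (-1 / ((d : ℝ) - 1)))
    (hreq : t₀ = r ^ 2 - d * t ^ 2 * r ^ (2 * d))
    (k : ℕ) :
    (1 / (2 * (Real.pi : ℂ))) *
        ∫ θ in (0:ℝ)..(2 * Real.pi),
          psi d r t (Complex.exp (-(θ : ℂ) * Complex.I))
            * psi d r t (Complex.exp ((θ : ℂ) * Complex.I)) ^ (-(k : ℤ))
            * psi' d r t (Complex.exp ((θ : ℂ) * Complex.I))
            * Complex.exp ((θ : ℂ) * Complex.I)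
      = if k = 0 then (t₀ : ℂ) else if k = d + 1 then (t : ℂ) else 0 := by
  have har : t * r ^ d < r := har_lemma d hd t r ht hrpos hrcrit
  have hπ : (2 * (Real.pi : ℂ)) ≠ 0 := by
    simp [Real.pi_ne_zero, Complex.ofReal_ne_zero]
  have hrne : (r : ℂ) ≠ 0 := Complex.ofReal_ne_zero.mpr hrpos.ne'
  suffices h : (1 / (2 * (Real.pi : ℂ))) * (∫ θ in (0:ℝ)..(2 * Real.pi), Jf d k r t θ)
      = if k = 0 then (t₀ : ℂ) else if k = d + 1 then (t : ℂ) else 0 by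
    exact h
  by_cases hk0 : k = 0
  · subst hk0
    rw [if_pos rfl, caseC d hd r t, hreq]
    push_cast
    field_simp
  · by_cases hdvd : (d+1) ∣ k
    · have hk1 : d + 1 ≤ k := Nat.le_of_dvd (Nat.pos_of_ne_zero hk0) hdvd
      set m : ℕ := k - (d+1) with hmdef
      have hkm : k = d + 1 + m := by omega
      rw [intervalIntegral.integral_congr
        (fun θ _ => pointwiseE d k hd r t ht hrpos har m hkm θ),
        flip_int (Hf d k r t m), cauchyE d k hd r t ht hrpos har m]
      by_cases hkd : k = d + 1
      · have hm0 : m = 0 := by omega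
        rw [if_neg hk0, if_pos hkd, hm0, if_pos rfl]
        have hval : (t:ℂ) * (r:ℂ)^d * r / (r:ℂ)^k = (t:ℂ) := by
          rw [hkd, pow_succ]
          field_simp
        rw [hval]
        field_simp
      · have hm0 : m ≠ 0 := by omega
        rw [if_neg hm0, if_neg hk0, if_neg hkd]
        ring
    · have hkd : k ≠ d + 1 := fun h => hdvd (h ▸ dvd_refl (d+1))
      rw [caseD d k hd r t ht hrpos har hdvd, if_neg hk0, if_neg hkd]
      ring
end

section
/- Let d ≥ 2 be an integer and r > 0, t > 0. Then ψ is injective on the set {w ∈ ℂ : |w| ≥ ρ}; that is, if |w₁| ≥ ρ, |w₂| ≥ ρ and ψ(w₁) = ψ(w₂), then w₁ = w₂. -/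
open Complex Finset

/-- `ρ = (d·t·r^{d-1})^{1/(d+1)}`. -/
noncomputable def rho (d : ℕ) (r t : ℝ) : ℝ :=
  ((d : ℝ) * t * r ^ (d - 1)) ^ ((1 : ℝ) / ((d : ℝ) + 1))


/-- symmetry of the geometric-type sum -/
lemma sum_symm (d : ℕ) (x y : ℂ) :
    ∑ k ∈ range d, x^k * y^(d-1-k) = ∑ k ∈ range d, y^k * x^(d-1-k) := by
  rw [← Finset.sum_range_reflect (fun k => y^k * x^(d-1-k)) d]
  apply Finset.sum_congr rfl
  intro k hk
  rw [Finset.mem_range] at hk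
  have : d - 1 - (d - 1 - k) = k := by omega
  rw [this, mul_comm]

/-- from the abs inequality, the ratio bound -/
lemma ratio_le (d : ℕ) (hd : 2 ≤ d) (r t ρ : ℝ) (hr : 0 < r) (ht : 0 < t)
    (hρ : 0 < ρ) (hρpow : ρ^(d+1) = d * t * r^(d-1))
    (a b : ℝ) (ha : 0 < a) (hb : ρ ≤ b)
    (habs : r * a^d * b^d ≤ t * r^d * (∑ k ∈ range d, a^k * b^(d-1-k))) :
    a ≤ b := by
  have hb0 : 0 < b := lt_of_lt_of_le hρ hb
  set m : ℝ := max a b with hm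
  have hm0 : 0 < m := lt_of_lt_of_le ha (le_max_left _ _)
  have hsum : ∑ k ∈ range d, a^k * b^(d-1-k) ≤ d * m^(d-1) := by
    calc ∑ k ∈ range d, a^k * b^(d-1-k) ≤ ∑ k ∈ range d, m^k * m^(d-1-k) := by
          apply Finset.sum_le_sum
          intro k hk
          exact mul_le_mul (pow_le_pow_left₀ ha.le (le_max_left _ _) k)
            (pow_le_pow_left₀ hb0.le (le_max_right _ _) _)
            (pow_nonneg hb0.le _) (pow_nonneg hm0.le _)
      _ = ∑ k ∈ range d, m^(d-1) := by
          apply Finset.sum_congr rfl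
          intro k hk
          rw [Finset.mem_range] at hk
          rw [← pow_add]
          congr 1
          omega
      _ = d * m^(d-1) := by rw [Finset.sum_const, Finset.card_range]; ring
  have hrd : r^d = r^(d-1) * r := by
    rw [← pow_succ]; congr 1; omega
  have key : a^d * b^d ≤ ρ^(d+1) * m^(d-1) := by
    have h1 : r * (a^d * b^d) ≤ r * (ρ^(d+1) * m^(d-1)) := by
      calc r * (a^d * b^d) = r * a^d * b^d := by ring
        _ ≤ t * r^d * (d * m^(d-1)) := le_trans habs (by
            apply mul_le_mul_of_nonneg_left hsum
            positivity)
        _ = r * (ρ^(d+1) * m^(d-1)) := by rw [hρpow, hrd]; ring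
    exact le_of_mul_le_mul_left h1 hr
  rcases le_or_gt a b with h | h
  · exact h
  · -- m = a
    have hma : m = a := max_eq_left h.le
    rw [hma] at key
    have had : a^d = a^(d-1) * a := by rw [← pow_succ]; congr 1; omega
    have h1 : a^(d-1) * (a * b^d) ≤ a^(d-1) * ρ^(d+1) := by
      calc a^(d-1) * (a * b^d) = a^d * b^d := by rw [had]; ring
        _ ≤ ρ^(d+1) * a^(d-1) := key
        _ = a^(d-1) * ρ^(d+1) := by ring
    have h2 : a * b^d ≤ ρ^(d+1) := le_of_mul_le_mul_left h1 (pow_pos ha _)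
    have h3 : ρ^(d+1) ≤ b^(d+1) := pow_le_pow_left₀ hρ.le hb _
    have h4 : a * b^d ≤ b * b^d := by
      calc a * b^d ≤ ρ^(d+1) := h2
        _ ≤ b^(d+1) := h3
        _ = b * b^d := by rw [pow_succ]; ring
    exact le_of_mul_le_mul_right h4 (pow_pos hb0 _)

/-- equality case of the triangle inequality on the circle -/
lemma final_eq (ρ : ℝ) (hρ : 0 < ρ) (x y : ℂ)
    (hx : ‖x‖ = ρ) (hy : ‖y‖ = ρ)
    (hsum : 2 * ρ ≤ ‖x + y‖) : x = y := by
  have hy0 : y ≠ 0 := by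
    intro h; rw [h] at hy; simp at hy; exact hρ.ne' hy.symm
  have h2 : (2*ρ)^2 ≤ ‖x+y‖^2 := by
    apply pow_le_pow_left₀ (by positivity) hsum
  rw [Complex.sq_norm, Complex.normSq_add] at h2
  have hnx : Complex.normSq x = ρ^2 := by rw [← Complex.sq_norm, hx]
  have hny : Complex.normSq y = ρ^2 := by rw [← Complex.sq_norm, hy]
  rw [hnx, hny] at h2
  have hre : ρ^2 ≤ (x * (starRingEnd ℂ) y).re := by nlinarith
  have habs : ‖x * (starRingEnd ℂ) y‖ = ρ^2 := by
    rw [norm_mul, Complex.norm_conj, hx, hy]; ring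
  have hre' : (x * (starRingEnd ℂ) y).re ≤ ρ^2 := habs ▸ Complex.re_le_norm _
  have hree : (x * (starRingEnd ℂ) y).re = ρ^2 := le_antisymm hre' hre
  have him : (x * (starRingEnd ℂ) y).im = 0 := by
    have := Complex.sq_norm (x * (starRingEnd ℂ) y)
    rw [habs, Complex.normSq_apply, hree] at this
    nlinarith
  have hz : x * (starRingEnd ℂ) y = ((ρ^2 : ℝ) : ℂ) := by
    apply Complex.ext <;> simp [hree, him, ← Complex.ofReal_pow]
  have hz2 : y * (starRingEnd ℂ) y = ((ρ^2 : ℝ) : ℂ) := by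
    rw [Complex.mul_conj, hny]
  have : x * (starRingEnd ℂ) y = y * (starRingEnd ℂ) y := by rw [hz, hz2]
  exact mul_right_cancel₀ (by simpa using hy0) this


/-- `ψ` is injective on the set `{w : ρ ≤ |w|}`. -/
theorem stmt2 (d : ℕ) (hd : 2 ≤ d) (r t : ℝ) (hr : 0 < r) (ht : 0 < t)
    (w₁ w₂ : ℂ)
    (h₁ : rho d r t ≤ ‖w₁‖)
    (h₂ : rho d r t ≤ ‖w₂‖)
    (heq : psi d r t w₁ = psi d r t w₂) :
    w₁ = w₂ := by
  set ρ := rho d r t with hρdef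
  have hdR : (0:ℝ) < (d:ℝ) := by exact_mod_cast lt_of_lt_of_le two_pos hd
  have hX : (0:ℝ) < (d:ℝ) * t * r^(d-1) := by
    exact mul_pos (mul_pos hdR ht) (pow_pos hr _)
  have hρ : 0 < ρ := Real.rpow_pos_of_pos hX _
  have hρpow : ρ^(d+1) = (d:ℝ) * t * r^(d-1) := by
    rw [hρdef]
    unfold rho
    rw [← Real.rpow_natCast (((d : ℝ) * t * r ^ (d - 1)) ^ ((1 : ℝ) / ((d : ℝ) + 1))) (d+1),
      ← Real.rpow_mul hX.le]
    rw [show (1 : ℝ) / ((d : ℝ) + 1) * ((d+1 : ℕ) : ℝ) = 1 by push_cast; field_simp]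
    exact Real.rpow_one _
  have hw₁ : w₁ ≠ 0 := by
    intro h; rw [h] at h₁; simp at h₁; exact absurd h₁ (not_le.mpr hρ)
  have hw₂ : w₂ ≠ 0 := by
    intro h; rw [h] at h₂; simp at h₂; exact absurd h₂ (not_le.mpr hρ)
  by_contra hne
  -- the key identity
  have key : (r:ℂ) * w₁^d * w₂^d = (t:ℂ) * (r:ℂ)^d * ∑ k ∈ range d, w₁^k * w₂^(d-1-k) := by
    have hgeom := geom_sum₂_mul w₁ w₂ d
    unfold psi at heq
    field_simp at heq
    apply mul_left_cancel₀ (sub_ne_zero.mpr hne)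
    linear_combination heq - (t:ℂ)*(r:ℂ)^d * hgeom
  set a := ‖w₁‖ with hadef
  set b := ‖w₂‖ with hbdef
  have ha : 0 < a := lt_of_lt_of_le hρ h₁
  have hb : 0 < b := lt_of_lt_of_le hρ h₂
  -- abs of key
  have habs : r * a^d * b^d =
      t * r^d * ‖∑ k ∈ range d, w₁^k * w₂^(d-1-k)‖ := by
    have := congrArg (‖·‖) key
    simpa [norm_mul, norm_pow, Complex.norm_real, abs_of_pos hr, abs_of_pos ht] using this
  have hsum_le : ∀ (x y : ℂ), ‖∑ k ∈ range d, x^k * y^(d-1-k)‖ ≤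
      ∑ k ∈ range d, (‖x‖)^k * (‖y‖)^(d-1-k) := by
    intro x y
    refine le_trans (norm_sum_le _ _) (le_of_eq ?_)
    apply Finset.sum_congr rfl
    intro k hk
    simp [map_mul, map_pow]
  -- a = b
  have hab : a = b := by
    have h1 : a ≤ b := by
      apply ratio_le d hd r t ρ hr ht hρ hρpow a b ha h₂
      rw [habs]
      exact mul_le_mul_of_nonneg_left (hsum_le w₁ w₂) (by positivity)
    have h2 : b ≤ a := by
      apply ratio_le d hd r t ρ hr ht hρ hρpow b a hb h₁
      have habs' : r * b^d * a^d =
          t * r^d * ‖∑ k ∈ range d, w₂^k * w₁^(d-1-k)‖ := by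
        rw [← sum_symm, ← habs]; ring
      rw [habs']
      exact mul_le_mul_of_nonneg_left (hsum_le w₂ w₁) (by positivity)
    exact le_antisymm h1 h2
  -- a = ρ
  have hterm : ∀ k ∈ range d, a^k * a^(d-1-k) = a^(d-1) := by
    intro k hk
    rw [Finset.mem_range] at hk
    rw [← pow_add]; congr 1; omega
  have haρ : a = ρ := by
    refine le_antisymm ?_ h₁
    have h1 : r * a^d * a^d ≤ t * r^d * ((d:ℝ) * a^(d-1)) := by
      rw [← hab] at habs
      rw [habs]
      apply mul_le_mul_of_nonneg_left _ (by positivity)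
      refine le_trans (hsum_le w₁ w₂) ?_
      rw [← hadef, ← hbdef, ← hab]
      rw [Finset.sum_congr rfl hterm, Finset.sum_const, Finset.card_range]
      simp
    have hrd : r^d = r^(d-1) * r := by rw [← pow_succ]; congr 1; omega
    have h2 : a^(d-1) * (a^(d+1)) ≤ a^(d-1) * ρ^(d+1) := by
      have epow : a^(d-1) * a^(d+1) = a^d * a^d := by
        rw [← pow_add, ← pow_add]; congr 1; omega
      have e1 : r * (a^(d-1) * a^(d+1)) = r * a^d * a^d := by rw [epow]; ring
      have e2 : t * r^d * ((d:ℝ) * a^(d-1)) = r * (a^(d-1) * ρ^(d+1)) := by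
        rw [hρpow, hrd]; ring
      have := e1 ▸ (e2 ▸ h1)
      exact le_of_mul_le_mul_left (by linarith [this]) hr
    have h3 : a^(d+1) ≤ ρ^(d+1) := le_of_mul_le_mul_left h2 (pow_pos ha _)
    exact le_of_pow_le_pow_left₀ (by omega) hρ.le h3
  have hbρ : b = ρ := hab ▸ haρ
  -- |S| = d * ρ^(d-1)
  have hS : ‖∑ k ∈ range d, w₁^k * w₂^(d-1-k)‖ = (d:ℝ) * ρ^(d-1) := by
    have hrd : r^d = r^(d-1) * r := by rw [← pow_succ]; congr 1; omega
    have h1 : t * r^d * ‖∑ k ∈ range d, w₁^k * w₂^(d-1-k)‖ =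
        t * r^d * ((d:ℝ) * ρ^(d-1)) := by
      rw [← habs, haρ, hbρ]
      have : ρ^d * ρ^d = ρ^(d+1) * ρ^(d-1) := by rw [← pow_add, ← pow_add]; congr 1; omega
      rw [mul_assoc, this, hρpow, hrd]; ring
    exact mul_left_cancel₀ (by positivity) h1
  -- split off the first two terms
  have hsplit : ∑ k ∈ range d, w₁^k * w₂^(d-1-k) =
      (w₂^(d-1) + w₁ * w₂^(d-2)) + ∑ k ∈ Ico 2 d, w₁^k * w₂^(d-1-k) := by
    rw [Finset.range_eq_Ico, ← Finset.sum_Ico_consecutive _ (Nat.zero_le 2) hd]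
    congr 1
    rw [← Finset.range_eq_Ico]
    rw [Finset.sum_range_succ, Finset.sum_range_one]
    rw [pow_zero, pow_one, one_mul]
    congr 2
  have hT : ‖∑ k ∈ Ico 2 d, w₁^k * w₂^(d-1-k)‖ ≤ ((d:ℝ) - 2) * ρ^(d-1) := by
    refine le_trans (norm_sum_le _ _) ?_
    have : ∀ k ∈ Ico 2 d, ‖w₁^k * w₂^(d-1-k)‖ = ρ^(d-1) := by
      intro k hk
      rw [Finset.mem_Ico] at hk
      rw [norm_mul, norm_pow, norm_pow, ← hadef, ← hbdef, haρ, hbρ, ← pow_add]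
      congr 1; omega
    rw [Finset.sum_congr rfl this, Finset.sum_const, Nat.card_Ico]
    have : ((d - 2 : ℕ) : ℝ) = (d:ℝ) - 2 := by
      rw [Nat.cast_sub hd]; norm_num
    rw [nsmul_eq_mul, this]
  -- |w₁ + w₂| ≥ 2ρ
  have hpair : 2 * ρ ≤ ‖w₁ + w₂‖ := by
    have h1 : (d:ℝ) * ρ^(d-1) ≤ ‖w₂^(d-1) + w₁ * w₂^(d-2)‖ +
        ((d:ℝ) - 2) * ρ^(d-1) := by
      rw [← hS, hsplit]
      refine le_trans (norm_add_le _ _) ?_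
      exact add_le_add_right hT _
    have h2 : 2 * ρ^(d-1) ≤ ‖w₂^(d-1) + w₁ * w₂^(d-2)‖ := by linarith
    have h3 : ‖w₂^(d-1) + w₁ * w₂^(d-2)‖ = ρ^(d-2) * ‖w₁ + w₂‖ := by
      have e : w₂^(d-1) + w₁ * w₂^(d-2) = w₂^(d-2) * (w₁ + w₂) := by
        have : w₂^(d-1) = w₂^(d-2) * w₂ := by rw [← pow_succ]; congr 1; omega
        rw [this]; ring
      rw [e, norm_mul, norm_pow, ← hbdef, hbρ]
    have h4 : ρ^(d-1) = ρ^(d-2) * ρ := by rw [← pow_succ]; congr 1; omega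
    rw [h3] at h2
    rw [h4] at h2
    have := le_of_mul_le_mul_left (by linarith [h2] : ρ^(d-2) * (2*ρ) ≤ ρ^(d-2) * ‖w₁ + w₂‖) (pow_pos hρ (d-2))
    linarith
  exact hne (final_eq ρ hρ w₁ w₂ haρ hbρ hpair)
end

section
/- Let d ≥ 2 be an integer and r > 0, t > 0. Then for every w ∈ ℂ with |w| ≥ ρ: if Im w > 0 then Im ψ(w) > 0, and if Im w < 0 then Im ψ(w) < 0. -/
open Complex

lemma im_pow_le (w : ℂ) : ∀ n : ℕ, |(w^(n+1)).im| ≤ (n+1) * ‖w‖ ^ n * |w.im| := by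
  intro n
  induction n with
  | zero => simp
  | succ n ih =>
    have h1 : (w^(n+2)).im = (w^(n+1)).re * w.im + (w^(n+1)).im * w.re := by
      rw [pow_succ, Complex.mul_im]
    have h2 : |(w^(n+1)).re| ≤ ‖w‖ ^ (n+1) := by
      simpa [map_pow] using Complex.abs_re_le_norm (w^(n+1))
    have h3 : |w.re| ≤ ‖w‖ := Complex.abs_re_le_norm w
    calc |(w^(n+2)).im| ≤ |(w^(n+1)).re| * |w.im| + |(w^(n+1)).im| * |w.re| := by
          rw [h1]; exact (abs_add_le _ _).trans_eq (by rw [abs_mul, abs_mul])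
      _ ≤ ‖w‖ ^ (n+1) * |w.im| + ((n+1) * ‖w‖ ^ n * |w.im|) * ‖w‖ := by
          gcongr <;> first | positivity | assumption
      _ = ((n+1 : ℕ)+1) * ‖w‖ ^ (n+1) * |w.im| := by push_cast; ring

lemma im_pow_lt (w : ℂ) (him : w.im ≠ 0) : ∀ n : ℕ, 2 ≤ n → |(w^n).im| < n * ‖w‖ ^ (n-1) * |w.im| := by
  have hw : w ≠ 0 := fun h => him (by simp [h])
  have hA : 0 < ‖w‖ := by simpa using hw
  have him' : 0 < |w.im| := abs_pos.mpr him
  have hre : |w.re| < ‖w‖ := Complex.abs_re_lt_norm.mpr him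
  intro n hn
  induction n, hn using Nat.le_induction with
  | base =>
    have h1 : (w^2).im = w.re * w.im + w.im * w.re := by rw [sq, Complex.mul_im]
    have : |(w^2).im| ≤ 2 * |w.re| * |w.im| := by
      rw [h1]
      calc |w.re * w.im + w.im * w.re| ≤ |w.re*w.im| + |w.im*w.re| := abs_add_le _ _
        _ = 2 * |w.re| * |w.im| := by rw [abs_mul, abs_mul]; ring
    have h2 : 2 * |w.re| * |w.im| < 2 * ‖w‖ * |w.im| := by nlinarith
    calc |(w^2).im| ≤ 2 * |w.re| * |w.im| := this
      _ < 2 * ‖w‖ * |w.im| := h2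
      _ = 2 * ‖w‖ ^ (2-1) * |w.im| := by norm_num
  | succ n hn ih =>
    have h1 : (w^(n+1)).im = (w^n).re * w.im + (w^n).im * w.re := by
      rw [pow_succ, Complex.mul_im]
    have h2 : |(w^n).re| ≤ ‖w‖ ^ n := by
      simpa [map_pow] using Complex.abs_re_le_norm (w^n)
    have hpow : ‖w‖ ^ (n-1) * ‖w‖ = ‖w‖ ^ n := by
      rw [← pow_succ, Nat.sub_add_cancel (by omega)]
    calc |(w^(n+1)).im| ≤ |(w^n).re| * |w.im| + |(w^n).im| * |w.re| := by
          rw [h1]; exact (abs_add_le _ _).trans_eq (by rw [abs_mul, abs_mul])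
      _ ≤ ‖w‖ ^ n * |w.im| + |(w^n).im| * ‖w‖ := by
          gcongr <;> first | positivity | assumption | exact le_of_lt hre
      _ < ‖w‖ ^ n * |w.im| + (n * ‖w‖ ^ (n-1) * |w.im|) * ‖w‖ := by
          gcongr
      _ = ((n+1 : ℕ)) * ‖w‖ ^ ((n+1)-1) * |w.im| := by
          push_cast
          rw [← hpow]
          ring


/-- For `|w| ≥ ρ`, `ψ` maps the open upper (resp. lower) half plane into itself. -/
theorem stmt4 (d : ℕ) (hd : 2 ≤ d) (r t : ℝ) (hr : 0 < r) (ht : 0 < t)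
    (w : ℂ) (hw : rho d r t ≤ ‖w‖) :
    (0 < w.im → 0 < (psi d r t w).im) ∧ (w.im < 0 → (psi d r t w).im < 0) := by
  set A := ‖w‖ with hAdef
  have hdpos : (0:ℝ) < (d:ℝ) := by exact_mod_cast (by omega : 0 < d)
  have hbase : 0 < (d:ℝ) * t * r ^ (d-1) := by positivity
  have hrho : 0 < rho d r t := Real.rpow_pos_of_pos hbase _
  have hA0 : 0 < A := lt_of_lt_of_le hrho hw
  have hw0 : w ≠ 0 := by
    intro h; rw [hAdef, h] at hA0; simp at hA0
  have hrhopow : rho d r t ^ (d+1) = (d:ℝ) * t * r ^ (d-1) := by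
    rw [rho, ← Real.rpow_natCast (((d:ℝ)*t*r^(d-1)) ^ ((1:ℝ)/((d:ℝ)+1))) (d+1),
      ← Real.rpow_mul hbase.le]
    push_cast
    rw [one_div_mul_cancel (by positivity : (d:ℝ)+1 ≠ 0), Real.rpow_one]
  have hApow : (d:ℝ) * t * r ^ (d-1) ≤ A ^ (d+1) := by
    rw [← hrhopow]; exact pow_le_pow_left₀ hrho.le hw (d+1)
  have h2 : Complex.normSq (w^d) = A ^ (2*d) := by
    rw [← Complex.sq_norm, norm_pow, ← pow_mul, mul_comm]
  have him_psi : (psi d r t w).im = r * w.im - t * r^d * (w^d).im / A^(2*d) := by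
    simp only [psi, Complex.add_im, Complex.div_im, h2, Complex.mul_im, Complex.mul_re,
      Complex.ofReal_re, Complex.ofReal_im, ← Complex.ofReal_pow]
    ring
  have key : w.im ≠ 0 → |t*r^d*(w^d).im / A^(2*d)| < r * |w.im| := by
    intro hy
    have h3 := im_pow_lt w hy d hd
    have e1 : A^(2*d) = A^(d+1) * A^(d-1) := by rw [← pow_add]; congr 1; omega
    have e2 : r^d = r^(d-1) * r := by
      rw [← pow_succ]; congr 1; omega
    have himpos : 0 < |w.im| := abs_pos.mpr hy
    calc |t*r^d*(w^d).im / A^(2*d)| = t*r^d*|(w^d).im| / A^(2*d) := by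
          rw [abs_div, abs_mul, abs_mul, abs_of_pos ht, abs_of_pos (pow_pos hr d),
            abs_of_pos (pow_pos hA0 _)]
      _ < t*r^d*((d:ℝ) * A^(d-1) * |w.im|) / A^(2*d) := by
          apply div_lt_div_of_pos_right ?_ (by positivity)
          exact mul_lt_mul_of_pos_left h3 (by positivity)
      _ ≤ r * |w.im| := by
          rw [div_le_iff₀ (by positivity)]
          have hm := mul_le_mul_of_nonneg_left hApow
            (by positivity : (0:ℝ) ≤ r * |w.im| * A^(d-1))
          rw [e1, e2]; nlinarith [hm]
  constructor
  · intro hy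
    have hk := key hy.ne'
    rw [abs_of_pos hy] at hk
    rw [him_psi]
    have := le_abs_self (t*r^d*(w^d).im / A^(2*d))
    linarith
  · intro hy
    have hk := key hy.ne
    rw [abs_of_neg hy] at hk
    rw [him_psi]
    have := neg_abs_le (t*r^d*(w^d).im / A^(2*d))
    linarith
end

section
/- Let d ≥ 2 be an integer and let λ₁, λ₂ ∈ ℂ satisfy |λ₁| ≥ |λ₂| ≥ 1. If λ₁^d · λ₂^d = (1/d) · ∑_{j=0}^{d−1} λ₁^{d−1−j} · λ₂^{j}, then λ₁ = λ₂. -/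
open Complex

/-- Rigidity: if `|λ₁| ≥ |λ₂| ≥ 1` and `λ₁^d λ₂^d = (1/d) ∑_{j=0}^{d-1} λ₁^{d-1-j} λ₂^j`,
then `λ₁ = λ₂`. -/
theorem stmt8 (d : ℕ) (hd : 2 ≤ d) (l₁ l₂ : ℂ)
    (h₂ : 1 ≤ ‖l₂‖) (h₁₂ : ‖l₂‖ ≤ ‖l₁‖)
    (heq : l₁ ^ d * l₂ ^ d = (1 / (d : ℂ)) * ∑ j ∈ Finset.range d, l₁ ^ (d - 1 - j) * l₂ ^ j) :
    l₁ = l₂ := by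
  set a := ‖l₁‖ with ha
  set b := ‖l₂‖ with hb
  have hd0 : 0 < d := by omega
  have hdC : (d : ℂ) ≠ 0 := Nat.cast_ne_zero.mpr (by omega)
  have ha1 : 1 ≤ a := le_trans h₂ h₁₂
  have ha0 : 0 < a := lt_of_lt_of_le one_pos ha1
  have hb0 : 0 < b := lt_of_lt_of_le one_pos h₂
  set S := ∑ j ∈ Finset.range d, l₁ ^ (d - 1 - j) * l₂ ^ j with hS
  have heq' : (d : ℂ) * (l₁ ^ d * l₂ ^ d) = S := by
    rw [heq]; field_simp
  -- abs of each term
  have habsterm : ∀ j ∈ Finset.range d,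
      ‖l₁ ^ (d - 1 - j) * l₂ ^ j‖ = a ^ (d - 1 - j) * b ^ j := by
    intro j _; simp [map_mul, map_pow, ha, hb]
  -- abs of sum
  have hSabs : ‖S‖ = d * (a ^ d * b ^ d) := by
    rw [← heq']
    simp [map_mul, map_pow, Complex.norm_natCast, ha, hb]
  -- triangle inequality bound
  have hbound : ‖S‖ ≤ d * a ^ (d - 1) := by
    calc ‖S‖ ≤ ∑ j ∈ Finset.range d, ‖l₁ ^ (d - 1 - j) * l₂ ^ j‖ :=
          norm_sum_le _ _
      _ ≤ ∑ j ∈ Finset.range d, a ^ (d - 1) := by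
          apply Finset.sum_le_sum
          intro j hj
          rw [habsterm j hj]
          have hj' : j ≤ d - 1 := by
            simp only [Finset.mem_range] at hj; omega
          calc a ^ (d - 1 - j) * b ^ j ≤ a ^ (d - 1 - j) * a ^ j := by
                apply mul_le_mul_of_nonneg_left (pow_le_pow_left₀ (le_of_lt hb0) h₁₂ j)
                positivity
            _ = a ^ (d - 1) := by rw [← pow_add]; congr 1; omega
      _ = d * a ^ (d - 1) := by simp [mul_comm]
  -- deduce a = 1
  have hkey : a ^ d * b ^ d ≤ a ^ (d - 1) := by
    rw [hSabs] at hbound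
    have : (0:ℝ) < d := Nat.cast_pos.mpr hd0
    nlinarith
  have haa : a ^ (d - 1) * a ≤ a ^ (d - 1) * 1 := by
    have h1 : a ^ (d - 1) * a = a ^ d := by
      rw [← pow_succ]; congr 1; omega
    have h2 : a ^ d ≤ a ^ d * b ^ d := by
      nlinarith [one_le_pow₀ h₂ (n := d), pow_pos ha0 d]
    nlinarith
  have hae : a = 1 := le_antisymm (by
    have := le_of_mul_le_mul_left haa (pow_pos ha0 (d-1))
    linarith) ha1
  have hbe : b = 1 := le_antisymm (hae ▸ h₁₂) h₂
  -- now |S| = d and each term has abs 1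
  have hterm1 : ∀ j ∈ Finset.range d, ‖l₁ ^ (d - 1 - j) * l₂ ^ j‖ = 1 := by
    intro j hj; rw [habsterm j hj, hae, hbe]; simp
  have hSd : ‖S‖ = d := by rw [hSabs, hae, hbe]; simp
  -- equality in triangle inequality via real parts
  set t : ℕ → ℂ := fun j => l₁ ^ (d - 1 - j) * l₂ ^ j with ht
  have hre_sum : ∑ j ∈ Finset.range d, ((starRingEnd ℂ) S * t j).re = (d : ℝ) * d := by
    have : ∑ j ∈ Finset.range d, (starRingEnd ℂ) S * t j = (starRingEnd ℂ) S * S := by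
      rw [← Finset.mul_sum]
    calc ∑ j ∈ Finset.range d, ((starRingEnd ℂ) S * t j).re
        = (∑ j ∈ Finset.range d, (starRingEnd ℂ) S * t j).re := by
          rw [Complex.re_sum]
      _ = ((starRingEnd ℂ) S * S).re := by rw [this]
      _ = Complex.normSq S := by
          simp [Complex.mul_re, Complex.normSq_apply]
      _ = (d : ℝ) * d := by
          rw [← Complex.sq_norm, hSd]; ring
  have hre_le : ∀ j ∈ Finset.range d, ((starRingEnd ℂ) S * t j).re ≤ (d : ℝ) := by
    intro j hj
    calc ((starRingEnd ℂ) S * t j).re ≤ ‖(starRingEnd ℂ) S * t j‖ := Complex.re_le_norm _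
      _ = ‖S‖ * ‖t j‖ := by rw [norm_mul, Complex.norm_conj]
      _ = d := by rw [hSd, hterm1 j hj]; ring
  have heach : ∀ j ∈ Finset.range d, ((starRingEnd ℂ) S * t j).re = (d : ℝ) := by
    by_contra hcon
    push_neg at hcon
    obtain ⟨j, hj, hne⟩ := hcon
    have hlt : ((starRingEnd ℂ) S * t j).re < d := lt_of_le_of_ne (hre_le j hj) hne
    have : ∑ j ∈ Finset.range d, ((starRingEnd ℂ) S * t j).re < ∑ j ∈ Finset.range d, (d : ℝ) :=
      Finset.sum_lt_sum (fun i hi => hre_le i hi) ⟨j, hj, hlt⟩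
    rw [hre_sum, Finset.sum_const, Finset.card_range] at this
    simp [nsmul_eq_mul, mul_comm] at this
  -- each conj S * t j equals d
  have heqz : ∀ j ∈ Finset.range d, (starRingEnd ℂ) S * t j = (d : ℂ) := by
    intro j hj
    set z := (starRingEnd ℂ) S * t j with hz
    have hre : z.re = (d : ℝ) := heach j hj
    have habs : ‖z‖ = d := by
      rw [hz, norm_mul, Complex.norm_conj, hSd, hterm1 j hj]; ring
    have him : z.im = 0 := by
      have h1 : (‖z‖) ^ 2 = z.re ^ 2 + z.im ^ 2 := by
        rw [Complex.sq_norm, Complex.normSq_apply]; ring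
      rw [habs, hre] at h1
      nlinarith
    rw [Complex.ext_iff]
    simp [hre, him]
  have hSne : (starRingEnd ℂ) S ≠ 0 := by
    intro h
    have : ‖S‖ = 0 := by
      rw [← Complex.norm_conj, h, norm_zero]
    rw [hSd] at this
    exact hdC (by exact_mod_cast this)
  have h01 : t 0 = t 1 := by
    have e0 := heqz 0 (Finset.mem_range.mpr hd0)
    have e1 := heqz 1 (Finset.mem_range.mpr (by omega))
    exact mul_left_cancel₀ hSne (e0.trans e1.symm)
  -- conclude
  have hl1 : l₁ ≠ 0 := by
    intro h
    rw [ha, h] at hae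
    simp at hae
  have hpow : l₁ ^ (d - 2) * l₁ = l₁ ^ (d - 2) * l₂ := by
    have ht0 : t 0 = l₁ ^ (d - 1) := by simp [ht]
    have ht1 : t 1 = l₁ ^ (d - 2) * l₂ := by
      simp only [ht, pow_one]
      congr 2
    have : l₁ ^ (d - 2) * l₁ = l₁ ^ (d - 1) := by
      rw [← pow_succ]; congr 1; omega
    rw [this, ← ht0, h01, ht1]
  exact mul_left_cancel₀ (pow_ne_zero _ hl1) hpow
end

section
/- Let d ≥ 2 be an integer and ω = e^{2πi/(d+1)}. Then there exist lower-triangular complex (d+1)×(d+1) matrices C⁺ and C⁻, both with all diagonal entries equal to 1, such that (I + ∑_{j=1}^{⌈d/2⌉} E_{2j−1,2j}) · C⁺ = C⁻ · D₁ and (Λ + ∑_{j=1}^{⌊d/2⌋} E_{2j,2j+1}) · C⁻ = C⁺ · D₂. Here Λ is the diagonal matrix with Λ_{1,1} = 1, Λ_{2j,2j} = ω^{−j} and Λ_{2j+1,2j+1} = ω^{j}; D₁ is the block-diagonal matrix consisting of (d+1)/2 blocks iσ₂ if d is odd, and of d/2 blocks iσ₂ followed by a final diagonal entry 1 if d is even;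 D₂ is the block-diagonal matrix diag(1, iσ₂, …, iσ₂, −1) (entry 1, then (d−1)/2 blocks iσ₂, then entry −1) if d is odd, and diag(1, iσ₂, …, iσ₂) (entry 1, then d/2 blocks iσ₂) if d is even. -/
open Matrix

/-- `ω = e^{2πi/(d+1)}`. -/
noncomputable def omC (d : ℕ) : ℂ := Complex.exp (2 * Real.pi * Complex.I / ((d : ℂ) + 1))

/-- The matrix `I + ∑_{j=1}^{⌈d/2⌉} E_{2j-1,2j}` (1-based indexing), of size `(d+1)×(d+1)`. -/
noncomputable def J1 (d : ℕ) : Matrix (Fin (d + 1)) (Fin (d + 1)) ℂ :=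
  Matrix.of fun i j =>
    (if i = j then (1 : ℂ) else 0) +
      (if (i : ℕ) % 2 = 0 ∧ (j : ℕ) = (i : ℕ) + 1 then 1 else 0)

/-- Diagonal entry of `Λ`: `Λ_{1,1} = 1`, `Λ_{2j,2j} = ω^{-j}`, `Λ_{2j+1,2j+1} = ω^j`
(1-based); here `i` is the 0-based index. -/
noncomputable def lamEntry (d : ℕ) (i : ℕ) : ℂ :=
  if i % 2 = 1 then (omC d ^ ((i + 1) / 2))⁻¹ else omC d ^ (i / 2)

/-- The matrix `Λ + ∑_{j=1}^{⌊d/2⌋} E_{2j,2j+1}` (1-based indexing). -/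
noncomputable def J2 (d : ℕ) : Matrix (Fin (d + 1)) (Fin (d + 1)) ℂ :=
  Matrix.of fun i j =>
    (if i = j then lamEntry d (i : ℕ) else 0) +
      (if (i : ℕ) % 2 = 1 ∧ (j : ℕ) = (i : ℕ) + 1 then 1 else 0)

/-- `D₁`: block-diagonal matrix of `iσ₂` blocks, `(d+1)/2` blocks if `d` is odd, and
`d/2` blocks followed by a final diagonal entry `1` if `d` is even. -/
noncomputable def D1 (d : ℕ) : Matrix (Fin (d + 1)) (Fin (d + 1)) ℂ :=
  Matrix.of fun i j =>
    if (i : ℕ) % 2 = 0 ∧ (j : ℕ) = (i : ℕ) + 1 then (1 : ℂ)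
    else if (i : ℕ) % 2 = 1 ∧ (i : ℕ) = (j : ℕ) + 1 then -1
    else if i = j ∧ (i : ℕ) = d ∧ d % 2 = 0 then 1
    else 0

/-- `D₂`: `diag(1, iσ₂, …, iσ₂, -1)` if `d` is odd, and `diag(1, iσ₂, …, iσ₂)` if `d`
is even. -/
noncomputable def D2 (d : ℕ) : Matrix (Fin (d + 1)) (Fin (d + 1)) ℂ :=
  Matrix.of fun i j =>
    if (i : ℕ) = 0 ∧ (j : ℕ) = 0 then (1 : ℂ)
    else if (i : ℕ) % 2 = 1 ∧ (j : ℕ) = (i : ℕ) + 1 then 1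
    else if (j : ℕ) % 2 = 1 ∧ (i : ℕ) = (j : ℕ) + 1 then -1
    else if i = j ∧ (i : ℕ) = d ∧ d % 2 = 1 then -1
    else 0

namespace Stmt9

open Polynomial Finset

/-- extension of a `Fin n`-vector to `ℕ`, by zero. -/
def ext {n : ℕ} (v : Fin n → ℂ) : ℕ → ℂ := fun m => if h : m < n then v ⟨m, h⟩ else 0

lemma ext_apply {n : ℕ} (v : Fin n → ℂ) (i : Fin n) : ext v (i : ℕ) = v i := by
  simp [ext, i.isLt]

lemma ext_of_ge {n : ℕ} (v : Fin n → ℂ) {m : ℕ} (h : n ≤ m) : ext v m = 0 := by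
  simp [ext, Nat.not_lt.mpr h]

lemma ext_add {n : ℕ} (v w : Fin n → ℂ) (m : ℕ) : ext (v + w) m = ext v m + ext w m := by
  unfold ext; split <;> simp

lemma ext_sub {n : ℕ} (v w : Fin n → ℂ) (m : ℕ) : ext (v - w) m = ext v m - ext w m := by
  unfold ext; split <;> simp

lemma ext_neg {n : ℕ} (v : Fin n → ℂ) (m : ℕ) : ext (-v) m = -(ext v m) := by
  unfold ext; split <;> simp

lemma sum_ite_coe {n : ℕ} (m : ℕ) (f : Fin n → ℂ) :
    (∑ k : Fin n, if (k : ℕ) = m then f k else 0) = if h : m < n then f ⟨m, h⟩ else 0 := by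
  by_cases h : m < n
  · rw [dif_pos h, Finset.sum_eq_single (⟨m, h⟩ : Fin n)]
    · simp
    · intro k _ hk; rw [if_neg]; intro hc; exact hk (Fin.ext hc)
    · intro hk; exact absurd (Finset.mem_univ _) hk
  · rw [dif_neg h]
    apply Finset.sum_eq_zero
    intro k _
    rw [if_neg]
    have := k.isLt; omega

variable {d : ℕ}

lemma omC_pr (d : ℕ) : IsPrimitiveRoot (omC d) (d + 1) := by
  have h := Complex.isPrimitiveRoot_exp (d + 1) (Nat.succ_ne_zero d)
  rw [show ((d + 1 : ℕ) : ℂ) = (d : ℂ) + 1 by push_cast; ring] at h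
  exact h

lemma omC_ne_zero (d : ℕ) : omC d ≠ 0 := Complex.exp_ne_zero _

lemma omC_pow_n (d : ℕ) : omC d ^ (d + 1) = 1 := (omC_pr d).pow_eq_one

lemma lam_ne_zero (d m : ℕ) : lamEntry d m ≠ 0 := by
  unfold lamEntry; split
  · exact inv_ne_zero (pow_ne_zero _ (omC_ne_zero d))
  · exact pow_ne_zero _ (omC_ne_zero d)

lemma lam_prod {t : ℕ} (ht : t % 2 = 0) (h1 : 1 ≤ t) :
    lamEntry d (t - 1) * lamEntry d t = 1 := by
  have h2 : (t - 1) % 2 = 1 := by omega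
  have h3 : (t - 1 + 1) / 2 = t / 2 := by omega
  unfold lamEntry
  rw [if_pos h2, if_neg (by omega), h3]
  exact inv_mul_cancel₀ (pow_ne_zero _ (omC_ne_zero d))

lemma lam_inv_prod {t : ℕ} (ht : t % 2 = 0) (h1 : 1 ≤ t) :
    (lamEntry d (t - 1))⁻¹ * (lamEntry d t)⁻¹ = 1 := by
  rw [← mul_inv]
  rw [lam_prod ht h1, inv_one]

lemma omC_half (hd2 : d % 2 = 1) : omC d ^ ((d + 1) / 2) = -1 := by
  have h := omC_pr d
  set x := omC d ^ ((d + 1) / 2) with hx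
  have hsq : x ^ 2 = 1 := by
    rw [hx, ← pow_mul]
    have : (d + 1) / 2 * 2 = d + 1 := by omega
    rw [this]; exact h.pow_eq_one
  have hne : x ≠ 1 := h.pow_ne_one_of_pos_of_lt (by omega) (by omega)
  have hz : (x - 1) * (x + 1) = 0 := by linear_combination hsq
  rcases mul_eq_zero.mp hz with h' | h'
  · exact absurd (by linear_combination h') hne
  · linear_combination h'

lemma lam_dd (hd2 : d % 2 = 1) : lamEntry d d = -1 := by
  unfold lamEntry
  rw [if_pos hd2, omC_half hd2]
  norm_num



noncomputable def S1 (d : ℕ) : Matrix (Fin (d + 1)) (Fin (d + 1)) ℂ :=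
  Matrix.of fun i j => if (i : ℕ) % 2 = 0 ∧ (j : ℕ) = (i : ℕ) + 1 then 1 else 0

noncomputable def S2 (d : ℕ) : Matrix (Fin (d + 1)) (Fin (d + 1)) ℂ :=
  Matrix.of fun i j => if (i : ℕ) % 2 = 1 ∧ (j : ℕ) = (i : ℕ) + 1 then 1 else 0

noncomputable def Lam (d : ℕ) : Matrix (Fin (d + 1)) (Fin (d + 1)) ℂ :=
  Matrix.diagonal fun i => lamEntry d (i : ℕ)

noncomputable def LamInv (d : ℕ) : Matrix (Fin (d + 1)) (Fin (d + 1)) ℂ :=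
  Matrix.diagonal fun i => (lamEntry d (i : ℕ))⁻¹

lemma J1_eq (d : ℕ) : J1 d = 1 + S1 d := by
  ext i j
  simp [J1, S1, Matrix.add_apply, Matrix.one_apply]

lemma J2_eq (d : ℕ) : J2 d = Lam d + S2 d := by
  ext i j
  by_cases h : i = j <;>
    simp [J2, Lam, S2, Matrix.add_apply, Matrix.diagonal_apply, h]

lemma lamEntry_ne_zero' (d : ℕ) (m : ℕ) : lamEntry d m ≠ 0 := lam_ne_zero d m

lemma Lam_mul_LamInv (d : ℕ) : Lam d * LamInv d = 1 := by
  rw [Lam, LamInv, Matrix.diagonal_mul_diagonal]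
  rw [show (fun i : Fin (d+1) => lamEntry d (i:ℕ) * (lamEntry d (i:ℕ))⁻¹) = fun _ => (1:ℂ) from
    funext fun i => mul_inv_cancel₀ (lam_ne_zero d _)]
  exact Matrix.diagonal_one

lemma LamInv_mul_Lam (d : ℕ) : LamInv d * Lam d = 1 := by
  rw [Lam, LamInv, Matrix.diagonal_mul_diagonal]
  rw [show (fun i : Fin (d+1) => (lamEntry d (i:ℕ))⁻¹ * lamEntry d (i:ℕ)) = fun _ => (1:ℂ) from
    funext fun i => inv_mul_cancel₀ (lam_ne_zero d _)]
  exact Matrix.diagonal_one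

lemma S1_sq (d : ℕ) : S1 d * S1 d = 0 := by
  ext i j
  rw [Matrix.mul_apply]
  apply Finset.sum_eq_zero
  intro k _
  simp only [S1, Matrix.of_apply]
  split_ifs <;> first | (exfalso; omega) | simp

lemma S2_LamInv_S2 (d : ℕ) : S2 d * LamInv d * S2 d = 0 := by
  ext i j
  rw [Matrix.mul_apply]
  apply Finset.sum_eq_zero
  intro k _
  rw [LamInv, Matrix.mul_diagonal]
  simp only [S2, Matrix.of_apply]
  split_ifs <;> first | (exfalso; omega) | simp

noncomputable def J1i (d : ℕ) : Matrix (Fin (d + 1)) (Fin (d + 1)) ℂ := 1 - S1 d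

noncomputable def J2i (d : ℕ) : Matrix (Fin (d + 1)) (Fin (d + 1)) ℂ :=
  LamInv d - LamInv d * S2 d * LamInv d

lemma J1_mul_J1i (d : ℕ) : J1 d * J1i d = 1 := by
  rw [J1_eq, J1i]
  have h := S1_sq d
  calc (1 + S1 d) * (1 - S1 d) = 1 - S1 d * S1 d := by noncomm_ring
  _ = 1 := by rw [h, sub_zero]

lemma J1i_mul_J1 (d : ℕ) : J1i d * J1 d = 1 := by
  rw [J1_eq, J1i]
  have h := S1_sq d
  calc (1 - S1 d) * (1 + S1 d) = 1 - S1 d * S1 d := by noncomm_ring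
  _ = 1 := by rw [h, sub_zero]

lemma J2_mul_J2i (d : ℕ) : J2 d * J2i d = 1 := by
  rw [J2_eq, J2i]
  have h1 := Lam_mul_LamInv d
  have h2 := S2_LamInv_S2 d
  calc (Lam d + S2 d) * (LamInv d - LamInv d * S2 d * LamInv d)
      = Lam d * LamInv d - (Lam d * LamInv d) * (S2 d * LamInv d)
        + S2 d * LamInv d - (S2 d * LamInv d * S2 d) * LamInv d := by noncomm_ring
  _ = 1 := by rw [h1, h2]; noncomm_ring

lemma J2i_mul_J2 (d : ℕ) : J2i d * J2 d = 1 := by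
  rw [J2_eq, J2i]
  have h1 := LamInv_mul_Lam d
  have h2 := S2_LamInv_S2 d
  calc (LamInv d - LamInv d * S2 d * LamInv d) * (Lam d + S2 d)
      = LamInv d * Lam d + LamInv d * S2 d
        - LamInv d * S2 d * (LamInv d * Lam d) - LamInv d * (S2 d * LamInv d * S2 d) := by
        noncomm_ring
  _ = 1 := by rw [h1, h2]; noncomm_ring


lemma ext_shift_mulVec (d p : ℕ) (v : Fin (d+1) → ℂ) (m : ℕ) :
    ext ((Matrix.of fun i j : Fin (d+1) =>
        if (i : ℕ) % 2 = p ∧ (j : ℕ) = (i : ℕ) + 1 then (1:ℂ) else 0) *ᵥ v) m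
      = if m % 2 = p then ext v (m+1) else 0 := by
  rcases Nat.lt_or_ge m (d+1) with hm | hm
  · have hext : ext ((Matrix.of fun i j : Fin (d+1) =>
        if (i : ℕ) % 2 = p ∧ (j : ℕ) = (i : ℕ) + 1 then (1:ℂ) else 0) *ᵥ v) m
        = ((Matrix.of fun i j : Fin (d+1) =>
        if (i : ℕ) % 2 = p ∧ (j : ℕ) = (i : ℕ) + 1 then (1:ℂ) else 0) *ᵥ v) ⟨m, hm⟩ :=
      dif_pos hm
    rw [hext]
    show (∑ k : Fin (d+1), (if (m : ℕ) % 2 = p ∧ (k : ℕ) = m + 1 then (1:ℂ) else 0) * v k) = _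
    by_cases hp : m % 2 = p
    · rw [if_pos hp]
      have h1 : ∀ k : Fin (d+1),
          (if (m : ℕ) % 2 = p ∧ (k : ℕ) = m + 1 then (1:ℂ) else 0) * v k
          = if (k : ℕ) = m + 1 then v k else 0 := by
        intro k
        by_cases hk : (k : ℕ) = m + 1
        · rw [if_pos ⟨hp, hk⟩, if_pos hk, one_mul]
        · rw [if_neg (by tauto), if_neg hk, zero_mul]
      rw [Finset.sum_congr rfl (fun k _ => h1 k), sum_ite_coe]
      unfold ext
      rfl
    · rw [if_neg hp]
      apply Finset.sum_eq_zero
      intro k _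
      rw [if_neg (by tauto), zero_mul]
  · rw [ext_of_ge _ hm, ext_of_ge _ (by omega)]
    simp

lemma ext_diag_mulVec (d : ℕ) (f : ℕ → ℂ) (v : Fin (d+1) → ℂ) (m : ℕ) :
    ext ((Matrix.diagonal fun i : Fin (d+1) => f (i : ℕ)) *ᵥ v) m = f m * ext v m := by
  rcases Nat.lt_or_ge m (d+1) with hm | hm
  · have hext : ext ((Matrix.diagonal fun i : Fin (d+1) => f (i : ℕ)) *ᵥ v) m
        = ((Matrix.diagonal fun i : Fin (d+1) => f (i : ℕ)) *ᵥ v) ⟨m, hm⟩ := dif_pos hm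
    rw [hext]
    show (∑ k : Fin (d+1), Matrix.diagonal (fun i : Fin (d+1) => f (i : ℕ)) ⟨m, hm⟩ k * v k) = _
    rw [Finset.sum_eq_single (⟨m, hm⟩ : Fin (d+1))]
    · rw [Matrix.diagonal_apply_eq]
      unfold ext
      rw [dif_pos hm]
    · intro k _ hk
      rw [Matrix.diagonal_apply_ne' _ hk, zero_mul]
    · intro h; exact absurd (Finset.mem_univ _) h
  · rw [ext_of_ge _ hm, ext_of_ge _ hm, mul_zero]

def opJ1 (w : ℕ → ℂ) : ℕ → ℂ := fun m => w m + if m % 2 = 0 then w (m+1) else 0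

noncomputable def opJ2 (d : ℕ) (w : ℕ → ℂ) : ℕ → ℂ :=
  fun m => lamEntry d m * w m + if m % 2 = 1 then w (m+1) else 0

def opJ1i (w : ℕ → ℂ) : ℕ → ℂ := fun m => w m - if m % 2 = 0 then w (m+1) else 0

noncomputable def opJ2i (d : ℕ) (w : ℕ → ℂ) : ℕ → ℂ :=
  fun m => (lamEntry d m)⁻¹ * w m
    - (lamEntry d m)⁻¹ * (if m % 2 = 1 then (lamEntry d (m+1))⁻¹ * w (m+1) else 0)

lemma ext_J1_mulVec (d : ℕ) (v : Fin (d+1) → ℂ) : ext (J1 d *ᵥ v) = opJ1 (ext v) := by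
  funext m
  rw [J1_eq, Matrix.add_mulVec, Matrix.one_mulVec, ext_add]
  have h := ext_shift_mulVec d 0 v m
  unfold opJ1
  rw [show (S1 d : Matrix (Fin (d+1)) (Fin (d+1)) ℂ) = Matrix.of fun i j : Fin (d+1) =>
    if (i : ℕ) % 2 = 0 ∧ (j : ℕ) = (i : ℕ) + 1 then (1:ℂ) else 0 from rfl, h]

lemma ext_S2_mulVec (d : ℕ) (v : Fin (d+1) → ℂ) (m : ℕ) :
    ext (S2 d *ᵥ v) m = if m % 2 = 1 then ext v (m+1) else 0 := by
  have h := ext_shift_mulVec d 1 v m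
  rw [show (S2 d : Matrix (Fin (d+1)) (Fin (d+1)) ℂ) = Matrix.of fun i j : Fin (d+1) =>
    if (i : ℕ) % 2 = 1 ∧ (j : ℕ) = (i : ℕ) + 1 then (1:ℂ) else 0 from rfl, h]

lemma ext_J2_mulVec (d : ℕ) (v : Fin (d+1) → ℂ) : ext (J2 d *ᵥ v) = opJ2 d (ext v) := by
  funext m
  rw [J2_eq, Matrix.add_mulVec, ext_add]
  unfold opJ2
  rw [show (Lam d : Matrix (Fin (d+1)) (Fin (d+1)) ℂ)
      = Matrix.diagonal fun i : Fin (d+1) => lamEntry d (i : ℕ) from rfl,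
    ext_diag_mulVec, ext_S2_mulVec]

lemma ext_J1i_mulVec (d : ℕ) (v : Fin (d+1) → ℂ) : ext (J1i d *ᵥ v) = opJ1i (ext v) := by
  funext m
  rw [J1i, Matrix.sub_mulVec, Matrix.one_mulVec, ext_sub]
  have h := ext_shift_mulVec d 0 v m
  unfold opJ1i
  rw [show (S1 d : Matrix (Fin (d+1)) (Fin (d+1)) ℂ) = Matrix.of fun i j : Fin (d+1) =>
    if (i : ℕ) % 2 = 0 ∧ (j : ℕ) = (i : ℕ) + 1 then (1:ℂ) else 0 from rfl, h]

lemma ext_LamInv_mulVec (d : ℕ) (v : Fin (d+1) → ℂ) (m : ℕ) :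
    ext (LamInv d *ᵥ v) m = (lamEntry d m)⁻¹ * ext v m := by
  have h := ext_diag_mulVec d (fun m => (lamEntry d m)⁻¹) v m
  rw [show (LamInv d : Matrix (Fin (d+1)) (Fin (d+1)) ℂ)
      = Matrix.diagonal fun i : Fin (d+1) => (lamEntry d (i : ℕ))⁻¹ from rfl, h]

lemma ext_J2i_mulVec (d : ℕ) (v : Fin (d+1) → ℂ) : ext (J2i d *ᵥ v) = opJ2i d (ext v) := by
  funext m
  rw [J2i, Matrix.sub_mulVec, ext_sub]
  have h2 : (LamInv d * S2 d * LamInv d) *ᵥ v = LamInv d *ᵥ (S2 d *ᵥ (LamInv d *ᵥ v)) := by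
    rw [Matrix.mulVec_mulVec, Matrix.mulVec_mulVec, Matrix.mul_assoc]
  rw [h2, ext_LamInv_mulVec, ext_LamInv_mulVec, ext_S2_mulVec]
  unfold opJ2i
  congr 1
  by_cases hp : m % 2 = 1
  · rw [if_pos hp, if_pos hp, ext_LamInv_mulVec]
  · rw [if_neg hp, if_neg hp, mul_zero]

noncomputable def Am (d : ℕ) : Matrix (Fin (d+1)) (Fin (d+1)) ℂ := J2 d * J1 d
noncomputable def Ai (d : ℕ) : Matrix (Fin (d+1)) (Fin (d+1)) ℂ := J1i d * J2i d

noncomputable def opA (d : ℕ) (w : ℕ → ℂ) : ℕ → ℂ := opJ2 d (opJ1 w)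
noncomputable def opAi (d : ℕ) (w : ℕ → ℂ) : ℕ → ℂ := opJ1i (opJ2i d w)

lemma ext_A_mulVec (d : ℕ) (v : Fin (d+1) → ℂ) : ext (Am d *ᵥ v) = opA d (ext v) := by
  rw [Am, ← Matrix.mulVec_mulVec, ext_J2_mulVec, ext_J1_mulVec]
  rfl

lemma ext_Ai_mulVec (d : ℕ) (v : Fin (d+1) → ℂ) : ext (Ai d *ᵥ v) = opAi d (ext v) := by
  rw [Ai, ← Matrix.mulVec_mulVec, ext_J1i_mulVec, ext_J2i_mulVec]
  rfl

def ed (d : ℕ) : Fin (d+1) → ℂ := fun i => if (i : ℕ) = d then 1 else 0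

def Ed (d : ℕ) : ℕ → ℂ := fun m => if m = d then 1 else 0

lemma ext_ed (d : ℕ) : ext (ed d) = Ed d := by
  funext m
  rcases Nat.lt_or_ge m (d+1) with hm | hm
  · rw [show ext (ed d) m = ed d ⟨m, hm⟩ from dif_pos hm]
    rfl
  · rw [ext_of_ge _ hm, Ed, if_neg (by omega)]

lemma ext_pow_A (d k : ℕ) : ext (Am d ^ k *ᵥ ed d) = (opA d)^[k] (Ed d) := by
  induction k with
  | zero => rw [pow_zero, Matrix.one_mulVec, Function.iterate_zero, id, ext_ed]
  | succ k ih =>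
      rw [pow_succ', ← Matrix.mulVec_mulVec, ext_A_mulVec, ih,
        Function.iterate_succ_apply']

lemma ext_pow_Ai (d k : ℕ) : ext (Ai d ^ k *ᵥ ed d) = (opAi d)^[k] (Ed d) := by
  induction k with
  | zero => rw [pow_zero, Matrix.one_mulVec, Function.iterate_zero, id, ext_ed]
  | succ k ih =>
      rw [pow_succ', ← Matrix.mulVec_mulVec, ext_Ai_mulVec, ih,
        Function.iterate_succ_apply']


def Top (t : ℕ) (w : ℕ → ℂ) : Prop := (∀ m, m < t → w m = 0) ∧ w t = 1

lemma Top_Ed (d : ℕ) : Top d (Ed d) :=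
  ⟨fun m hm => if_neg (by omega), if_pos rfl⟩

lemma stepA {d t : ℕ} (ht : t % 2 = 1) (h3 : 3 ≤ t) {w : ℕ → ℂ} (hw : Top t w) :
    Top (t - 2) (opA d w) := by
  constructor
  · intro m hm
    simp only [opA, opJ2, opJ1]
    rw [hw.1 m (by omega), hw.1 (m+1) (by omega), hw.1 (m+1+1) (by omega)]
    split_ifs <;> ring
  · simp only [opA, opJ2, opJ1]
    rw [if_pos (show (t-2) % 2 = 1 by omega), if_neg (show ¬ (t-2) % 2 = 0 by omega),
      if_pos (show (t-2+1) % 2 = 0 by omega), hw.1 (t-2) (by omega),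
      hw.1 (t-2+1) (by omega), show t-2+1+1 = t by omega, hw.2]
    ring

lemma stepA0 {d : ℕ} (hd1 : 1 ≤ d) (hd2 : d % 2 = 0) : Top (d - 1) (opA d (Ed d)) := by
  constructor
  · intro m hm
    have e1 : Ed d m = 0 := if_neg (by omega)
    have e2 : Ed d (m+1) = 0 := if_neg (by omega)
    simp only [opA, opJ2, opJ1, e1, e2]
    by_cases hp : m % 2 = 1
    · have e3 : Ed d (m+1+1) = 0 := if_neg (by omega)
      rw [if_pos hp, if_neg (by omega : ¬ m % 2 = 0), if_pos (by omega : (m+1) % 2 = 0), e3]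
      ring
    · rw [if_neg hp, if_pos (by omega : m % 2 = 0)]
      ring
  · simp only [opA, opJ2, opJ1]
    have e1 : Ed d (d-1) = 0 := if_neg (by omega)
    have e2 : Ed d (d-1+1) = 1 := if_pos (by omega)
    have e3 : Ed d (d-1+1+1) = 0 := if_neg (by omega)
    rw [if_pos (show (d-1) % 2 = 1 by omega), if_neg (show ¬ (d-1) % 2 = 0 by omega),
      if_pos (show (d-1+1) % 2 = 0 by omega), e1, e2, e3]
    ring

lemma stepB {d t : ℕ} (ht : t % 2 = 0) (h2 : 2 ≤ t) {w : ℕ → ℂ} (hw : Top t w) :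
    Top (t - 2) (opAi d w) ∧ opAi d w (t - 1) = -1 := by
  have hu0 : ∀ x, x < t - 1 → opJ2i d w x = 0 := by
    intro x hx
    simp only [opJ2i]
    rw [hw.1 x (by omega), hw.1 (x+1) (by omega)]
    split_ifs <;> ring
  have hut1 : opJ2i d w (t-1) = -((lamEntry d (t-1))⁻¹ * (lamEntry d t)⁻¹) := by
    simp only [opJ2i]
    rw [hw.1 (t-1) (by omega), if_pos (by omega : (t-1) % 2 = 1), show t-1+1 = t by omega,
      hw.2]
    ring
  have hprod := lam_inv_prod (d := d) ht (by omega)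
  refine ⟨⟨?_, ?_⟩, ?_⟩
  · intro m hm
    simp only [opAi, opJ1i]
    rw [hu0 m (by omega), hu0 (m+1) (by omega)]
    split_ifs <;> ring
  · simp only [opAi, opJ1i]
    rw [hu0 (t-2) (by omega), if_pos (by omega : (t-2) % 2 = 0), show t-2+1 = t-1 by omega,
      hut1]
    linear_combination hprod
  · simp only [opAi, opJ1i]
    rw [hut1, if_neg (by omega : ¬ (t-1) % 2 = 0)]
    linear_combination -hprod

lemma stepB0 {d : ℕ} (hd2 : d % 2 = 1) :
    Top (d - 1) (opAi d (Ed d)) ∧ opAi d (Ed d) d = -1 := by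
  have hu0 : ∀ x, x < d → opJ2i d (Ed d) x = 0 := by
    intro x hx
    simp only [opJ2i, Ed]
    rw [if_neg (by omega : ¬ x = d)]
    by_cases hp : x % 2 = 1
    · rw [if_pos hp, if_neg (by omega : ¬ x + 1 = d)]
      ring
    · rw [if_neg hp]
      ring
  have hud : opJ2i d (Ed d) d = -1 := by
    simp only [opJ2i, Ed]
    rw [if_pos hd2, if_neg (by omega : ¬ d + 1 = d), lam_dd hd2]
    norm_num
  refine ⟨⟨?_, ?_⟩, ?_⟩
  · intro m hm
    simp only [opAi, opJ1i]
    rw [hu0 m (by omega), hu0 (m+1) (by omega)]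
    split_ifs <;> ring
  · simp only [opAi, opJ1i]
    rw [hu0 (d-1) (by omega), if_pos (by omega : (d-1) % 2 = 0), show d-1+1 = d by omega,
      hud]
    ring
  · simp only [opAi, opJ1i]
    rw [hud, if_neg (by omega : ¬ d % 2 = 0)]
    ring

lemma chainA_odd {d : ℕ} (hd2 : d % 2 = 1) :
    ∀ k, 2 * k ≤ d → Top (d - 2 * k) ((opA d)^[k] (Ed d)) := by
  intro k
  induction k with
  | zero => intro _; simpa using Top_Ed d
  | succ k ih =>
      intro hk
      rw [Function.iterate_succ_apply']
      have h := stepA (d := d) (t := d - 2 * k) (by omega) (by omega) (ih (by omega))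
      rwa [show d - 2 * (k+1) = d - 2 * k - 2 by omega]

lemma chainA_even {d : ℕ} (hd1 : 1 ≤ d) (hd2 : d % 2 = 0) :
    ∀ k, 1 ≤ k → 2 * k ≤ d → Top (d + 1 - 2 * k) ((opA d)^[k] (Ed d)) := by
  intro k
  induction k with
  | zero => omega
  | succ k ih =>
      intro _ hk
      rcases Nat.eq_zero_or_pos k with hk0 | hk1
      · subst hk0
        rw [Function.iterate_one]
        rw [show d + 1 - 2 * 1 = d - 1 by omega]
        exact stepA0 hd1 hd2
      · rw [Function.iterate_succ_apply']
        have h := stepA (d := d) (t := d + 1 - 2 * k) (by omega) (by omega)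
          (ih (by omega) (by omega))
        rwa [show d + 1 - 2 * (k+1) = d + 1 - 2 * k - 2 by omega]

lemma chainB_even {d : ℕ} (hd2 : d % 2 = 0) :
    ∀ k, 2 * k ≤ d → Top (d - 2 * k) ((opAi d)^[k] (Ed d)) ∧
      (1 ≤ k → (opAi d)^[k] (Ed d) (d - 2 * k + 1) = -1) := by
  intro k
  induction k with
  | zero => intro _; exact ⟨by simpa using Top_Ed d, by omega⟩
  | succ k ih =>
      intro hk
      rw [Function.iterate_succ_apply']
      have h := stepB (d := d) (t := d - 2 * k) (by omega) (by omega) (ih (by omega)).1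
      refine ⟨?_, fun _ => ?_⟩
      · rw [show d - 2 * (k+1) = d - 2 * k - 2 by omega]
        exact h.1
      · rw [show d - 2 * (k+1) + 1 = d - 2 * k - 1 by omega]
        exact h.2

lemma chainB_odd {d : ℕ} (hd2 : d % 2 = 1) :
    ∀ k, 1 ≤ k → 2 * k ≤ d + 1 → Top (d + 1 - 2 * k) ((opAi d)^[k] (Ed d)) ∧
      (opAi d)^[k] (Ed d) (d + 2 - 2 * k) = -1 := by
  intro k
  induction k with
  | zero => omega
  | succ k ih =>
      intro _ hk
      rcases Nat.eq_zero_or_pos k with hk0 | hk1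
      · subst hk0
        rw [Function.iterate_one]
        have h := stepB0 (d := d) hd2
        exact ⟨by rw [show d + 1 - 2 * 1 = d - 1 by omega]; exact h.1,
          by rw [show d + 2 - 2 * 1 = d by omega]; exact h.2⟩
      · rw [Function.iterate_succ_apply']
        have h := stepB (d := d) (t := d + 1 - 2 * k) (by omega) (by omega)
          (ih (by omega) (by omega)).1
        exact ⟨by rw [show d + 1 - 2 * (k+1) = d + 1 - 2 * k - 2 by omega]; exact h.1,
          by rw [show d + 2 - 2 * (k+1) = d + 1 - 2 * k - 1 by omega]; exact h.2⟩


lemma J2_apply_ne (d : ℕ) {i k : Fin (d+1)} (h1 : ¬ (k:ℕ) = (i:ℕ)) (h2 : ¬ (k:ℕ) = (i:ℕ)+1) :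
    J2 d i k = 0 := by
  simp only [J2, Matrix.of_apply]
  rw [if_neg (fun hc => h1 (by rw [hc])), if_neg (by tauto)]
  ring

lemma J1_apply_ne (d : ℕ) {k j : Fin (d+1)} (h1 : ¬ (j:ℕ) = (k:ℕ)) (h2 : ¬ (j:ℕ) = (k:ℕ)+1) :
    J1 d k j = 0 := by
  simp only [J1, Matrix.of_apply]
  rw [if_neg (fun hc => h1 (by rw [hc])), if_neg (by tauto)]
  ring

lemma Am_lower (d : ℕ) {i j : Fin (d+1)} (h : (j:ℕ) < (i:ℕ)) : Am d i j = 0 := by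
  rw [Am, Matrix.mul_apply]
  apply Finset.sum_eq_zero
  intro k _
  by_cases hk : (k:ℕ) = (i:ℕ) ∨ (k:ℕ) = (i:ℕ)+1
  · rw [J1_apply_ne d (by omega) (by omega), mul_zero]
  · rw [J2_apply_ne d (by tauto) (by tauto), zero_mul]

lemma Am_diag (d : ℕ) (i : Fin (d+1)) : Am d i i = lamEntry d (i:ℕ) := by
  rw [Am, Matrix.mul_apply]
  rw [Finset.sum_eq_single i]
  · have h1 : J2 d i i = lamEntry d (i:ℕ) := by
      simp [J2]
    have h2 : J1 d i i = 1 := by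
      simp [J1]
    rw [h1, h2, mul_one]
  · intro k _ hk
    by_cases hck : (k:ℕ) = (i:ℕ)+1
    · rw [J1_apply_ne d (by omega) (by omega), mul_zero]
    · rw [J2_apply_ne d (fun hc => hk (Fin.ext hc)) hck, zero_mul]
  · intro h; exact absurd (Finset.mem_univ _) h

noncomputable def Pm (d : ℕ) : ℕ → Matrix (Fin (d+1)) (Fin (d+1)) ℂ
  | 0 => 1
  | (k+1) => Pm d k * (Am d - lamEntry d k • 1)

lemma Pm_lower (d : ℕ) : ∀ k, ∀ i j : Fin (d+1), (j:ℕ) < k → Pm d k i j = 0 := by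
  intro k
  induction k with
  | zero => intro i j h; omega
  | succ k ih =>
      intro i j hj
      show (Pm d k * (Am d - lamEntry d k • 1)) i j = 0
      rw [Matrix.mul_apply]
      apply Finset.sum_eq_zero
      intro r _
      by_cases hr : (r:ℕ) < k
      · rw [ih i r hr, zero_mul]
      · have hq : (Am d - lamEntry d k • 1) r j = 0 := by
          rw [Matrix.sub_apply, Matrix.smul_apply, Matrix.one_apply]
          by_cases hjr : (j:ℕ) < (r:ℕ)
          · rw [Am_lower d hjr, if_neg (fun hc => by subst hc; omega)]
            simp
          · have hrj : r = j := Fin.ext (by omega)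
            have hrk : (r:ℕ) = k := by omega
            subst hrj
            rw [Am_diag, if_pos rfl, hrk]
            simp
        rw [hq, mul_zero]

open Polynomial in
lemma Pm_eq_aeval (d : ℕ) : ∀ k,
    Pm d k = Polynomial.aeval (Am d) (∏ i ∈ Finset.range k, (X - C (lamEntry d i))) := by
  intro k
  induction k with
  | zero => simp [Pm]
  | succ k ih =>
      rw [Finset.prod_range_succ, _root_.map_mul]
      show Pm d k * (Am d - lamEntry d k • 1) = _
      rw [ih]
      congr 1
      rw [map_sub, Polynomial.aeval_X, Polynomial.aeval_C,
        Algebra.algebraMap_eq_smul_one]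

def expo (d i : ℕ) : ℕ := if i % 2 = 1 then (d+1) - (i+1)/2 else i/2

lemma lam_eq_pow (d : ℕ) {i : ℕ} (hi : i < d + 1) : lamEntry d i = omC d ^ expo d i := by
  unfold lamEntry expo
  by_cases h : i % 2 = 1
  · rw [if_pos h, if_pos h]
    have key : omC d ^ ((d+1) - (i+1)/2) * omC d ^ ((i+1)/2) = 1 := by
      rw [← pow_add, show (d+1) - (i+1)/2 + (i+1)/2 = d+1 by omega]
      exact omC_pow_n d
    exact (eq_inv_of_mul_eq_one_left key).symm
  · rw [if_neg h, if_neg h]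

open Polynomial in
lemma poly_prod (d : ℕ) :
    (∏ i ∈ Finset.range (d+1), (X - C (lamEntry d i))) = X ^ (d+1) - 1 := by
  have h1 : (∏ i ∈ Finset.range (d+1), (X - C (lamEntry d i)))
      = ∏ i ∈ Finset.range (d+1), (X - C (omC d ^ expo d i)) := by
    apply Finset.prod_congr rfl
    intro i hi
    rw [lam_eq_pow d (Finset.mem_range.mp hi)]
  rw [h1]
  have h2 : (∏ i ∈ Finset.range (d+1), (X - C (omC d ^ expo d i)))
      = ∏ k ∈ Finset.range (d+1), (X - C (omC d ^ k)) := by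
    apply Finset.prod_nbij' (expo d) (fun k => if 2 * k ≤ d then 2 * k else 2 * (d + 1 - k) - 1)
    · intro a ha
      simp only [Finset.mem_range] at *
      unfold expo
      split_ifs <;> omega
    · intro a ha
      simp only [Finset.mem_range] at *
      split_ifs <;> omega
    · intro a ha
      simp only [Finset.mem_range] at ha
      unfold expo
      split_ifs <;> omega
    · intro a ha
      simp only [Finset.mem_range] at ha
      unfold expo
      split_ifs <;> omega
    · intro a _
      rfl
  rw [h2]
  have hω := omC_pr d
  have himg : (Finset.range (d+1)).image (fun k => omC d ^ k)
      = Polynomial.nthRootsFinset (d+1) (1 : ℂ) := by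
    apply Finset.eq_of_subset_of_card_le
    · intro x hx
      rcases Finset.mem_image.mp hx with ⟨k, _, rfl⟩
      rw [Polynomial.mem_nthRootsFinset (by omega) (1 : ℂ)]
      rw [← pow_mul, mul_comm, pow_mul, omC_pow_n d, one_pow]
    · rw [hω.card_nthRootsFinset, Finset.card_image_of_injOn, Finset.card_range]
      intro a ha b hb hab
      exact hω.pow_inj (Finset.mem_range.mp ha) (Finset.mem_range.mp hb) hab
  have hinj : Set.InjOn (fun k => omC d ^ k) (Finset.range (d+1)) := by
    intro a ha b hb hab
    exact hω.pow_inj (Finset.mem_range.mp (by exact_mod_cast ha))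
      (Finset.mem_range.mp (by exact_mod_cast hb)) hab
  rw [X_pow_sub_one_eq_prod (by omega) hω, ← himg, Finset.prod_image hinj]

lemma Am_pow_eq_one (d : ℕ) : Am d ^ (d+1) = 1 := by
  have h0 : Pm d (d+1) = 0 := by
    ext i j
    rw [Pm_lower d (d+1) i j j.isLt]
    rfl
  rw [Pm_eq_aeval, poly_prod] at h0
  rw [map_sub, map_pow, Polynomial.aeval_X, _root_.map_one] at h0
  rw [← sub_eq_zero]
  exact h0


lemma Am_mul_Ai (d : ℕ) : Am d * Ai d = 1 := by
  rw [Am, Ai, Matrix.mul_assoc, ← Matrix.mul_assoc (J1 d), J1_mul_J1i, Matrix.one_mul,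
    J2_mul_J2i]

lemma Ai_mul_Am (d : ℕ) : Ai d * Am d = 1 := by
  rw [Am, Ai, Matrix.mul_assoc, ← Matrix.mul_assoc (J2i d), J2i_mul_J2, Matrix.one_mul,
    J1i_mul_J1]

lemma Ai_pow_mul_Am_pow (d : ℕ) : ∀ b, Ai d ^ b * Am d ^ b = 1 := by
  intro b
  induction b with
  | zero => simp
  | succ b ih =>
      rw [pow_succ, pow_succ', mul_assoc, ← mul_assoc (Ai d), Ai_mul_Am, one_mul, ih]

lemma pow_split (d : ℕ) {a b : ℕ} (h : a + b = d + 1) : Am d ^ a = Ai d ^ b := by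
  have h1 : Am d ^ a = (Ai d ^ b * Am d ^ b) * Am d ^ a := by
    rw [Ai_pow_mul_Am_pow, one_mul]
  rw [h1, mul_assoc, ← pow_add, show b + a = d + 1 by omega, Am_pow_eq_one, mul_one]

lemma Am_mul_Ai_pow (d : ℕ) {m : ℕ} (hm : 1 ≤ m) : Am d * Ai d ^ m = Ai d ^ (m - 1) := by
  have h : m = (m - 1) + 1 := by omega
  rw [h, pow_succ', ← mul_assoc, Am_mul_Ai, one_mul, Nat.add_sub_cancel]

noncomputable def cpcol (d j : ℕ) : Fin (d+1) → ℂ :=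
  if j % 2 = 1 then Am d ^ ((d + 1 - j) / 2) *ᵥ ed d else Ai d ^ ((d + 1 - j) / 2) *ᵥ ed d

noncomputable def cmcol (d j : ℕ) : Fin (d+1) → ℂ :=
  if j % 2 = 1 then -(J1 d *ᵥ cpcol d (j - 1))
  else if j < d then J1 d *ᵥ cpcol d (j + 1)
  else J1 d *ᵥ cpcol d d

lemma cpcol_ext (d j : ℕ) : ext (cpcol d j) =
    if j % 2 = 1 then (opA d)^[(d + 1 - j) / 2] (Ed d)
    else (opAi d)^[(d + 1 - j) / 2] (Ed d) := by
  unfold cpcol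
  split_ifs
  · exact ext_pow_A d _
  · exact ext_pow_Ai d _

lemma cpcol_top {d : ℕ} (hd1 : 1 ≤ d) {j : ℕ} (hj : j ≤ d) : Top j (ext (cpcol d j)) := by
  rw [cpcol_ext]
  by_cases hp : j % 2 = 1
  · rw [if_pos hp]
    by_cases hd2 : d % 2 = 1
    · have h := chainA_odd (d := d) hd2 ((d - j) / 2) (by omega)
      rw [show d - 2 * ((d - j) / 2) = j by omega] at h
      rwa [show (d + 1 - j) / 2 = (d - j) / 2 by omega]
    · have h := chainA_even (d := d) hd1 (by omega) ((d + 1 - j) / 2) (by omega) (by omega)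
      rwa [show d + 1 - 2 * ((d + 1 - j) / 2) = j by omega] at h
  · rw [if_neg hp]
    by_cases hd2 : d % 2 = 1
    · rcases Nat.eq_zero_or_pos (d - j) with h0 | h1
      · omega
      · have h := (chainB_odd (d := d) hd2 ((d + 1 - j) / 2) (by omega) (by omega)).1
        rwa [show d + 1 - 2 * ((d + 1 - j) / 2) = j by omega] at h
    · have h := (chainB_even (d := d) (by omega) ((d - j) / 2) (by omega)).1
      rw [show d - 2 * ((d - j) / 2) = j by omega] at h
      rwa [show (d + 1 - j) / 2 = (d - j) / 2 by omega]

lemma cpcol_sub {d : ℕ} {j : ℕ} (hj : j < d) (hp : j % 2 = 0) :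
    ext (cpcol d j) (j + 1) = -1 := by
  rw [cpcol_ext, if_neg (by omega)]
  by_cases hd2 : d % 2 = 1
  · have h := (chainB_odd (d := d) hd2 ((d + 1 - j) / 2) (by omega) (by omega)).2
    rwa [show d + 2 - 2 * ((d + 1 - j) / 2) = j + 1 by omega] at h
  · have h := (chainB_even (d := d) (by omega) ((d - j) / 2) (by omega)).2 (by omega)
    rw [show d - 2 * ((d - j) / 2) + 1 = j + 1 by omega] at h
    rwa [show (d + 1 - j) / 2 = (d - j) / 2 by omega]

lemma cpcol_d_even {d : ℕ} (hd2 : d % 2 = 0) : cpcol d d = ed d := by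
  rw [cpcol, if_neg (by omega), show (d + 1 - d) / 2 = 0 by omega, pow_zero,
    Matrix.one_mulVec]

lemma cmcol_top {d : ℕ} (hd1 : 1 ≤ d) {j : ℕ} (hj : j ≤ d) : Top j (ext (cmcol d j)) := by
  by_cases hp : j % 2 = 1
  · have h1 := cpcol_top hd1 (show j - 1 ≤ d by omega)
    have h2 : ext (cpcol d (j - 1)) (j - 1 + 1) = -1 := cpcol_sub (by omega) (by omega)
    have hext : ∀ m, ext (cmcol d j) m = -(opJ1 (ext (cpcol d (j - 1))) m) := by
      intro m
      rw [cmcol, if_pos hp, ext_neg, ext_J1_mulVec]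
    constructor
    · intro m hm
      rw [hext m]
      rcases Nat.lt_or_ge m (j - 1) with h | h
      · rw [show opJ1 (ext (cpcol d (j-1))) m
            = ext (cpcol d (j-1)) m + if m % 2 = 0 then ext (cpcol d (j-1)) (m+1) else 0
            from rfl]
        rw [h1.1 m (by omega)]
        by_cases hvp : m % 2 = 0
        · rw [if_pos hvp]
          rw [h1.1 (m + 1) (by omega)]
          ring
        · rw [if_neg hvp]; ring
      · have hm1 : m = j - 1 := by omega
        subst hm1
        rw [show opJ1 (ext (cpcol d (j-1))) (j-1)
            = ext (cpcol d (j-1)) (j-1)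
              + if (j-1) % 2 = 0 then ext (cpcol d (j-1)) (j-1+1) else 0 from rfl]
        rw [h1.2, if_pos (by omega), h2]
        ring
    · rw [hext j]
      rw [show opJ1 (ext (cpcol d (j-1))) j
          = ext (cpcol d (j-1)) j + if j % 2 = 0 then ext (cpcol d (j-1)) (j+1) else 0
          from rfl]
      have h2' : ext (cpcol d (j - 1)) j = -1 := by
        rw [show j - 1 + 1 = j by omega] at h2
        exact h2
      rw [if_neg (by omega), h2']
      ring
  · by_cases hlt : j < d
    · have h1 := cpcol_top hd1 (show j + 1 ≤ d by omega)
      have hext : ∀ m, ext (cmcol d j) m = opJ1 (ext (cpcol d (j + 1))) m := by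
        intro m
        rw [cmcol, if_neg hp, if_pos hlt, ext_J1_mulVec]
      constructor
      · intro m hm
        rw [hext m]
        rw [show opJ1 (ext (cpcol d (j+1))) m
            = ext (cpcol d (j+1)) m + if m % 2 = 0 then ext (cpcol d (j+1)) (m+1) else 0
            from rfl]
        rw [h1.1 m (by omega)]
        by_cases hvp : m % 2 = 0
        · rw [if_pos hvp, h1.1 (m + 1) (by omega)]; ring
        · rw [if_neg hvp]; ring
      · rw [hext j]
        rw [show opJ1 (ext (cpcol d (j+1))) j
            = ext (cpcol d (j+1)) j + if j % 2 = 0 then ext (cpcol d (j+1)) (j+1) else 0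
            from rfl]
        rw [h1.1 j (by omega), if_pos (by omega), h1.2]
        ring
    · have hjd : j = d := by omega
      have hd2 : d % 2 = 0 := by omega
      have hext : ∀ m, ext (cmcol d j) m = opJ1 (Ed d) m := by
        intro m
        rw [cmcol, if_neg hp, if_neg hlt, cpcol_d_even hd2, ext_J1_mulVec, ext_ed]
      constructor
      · intro m hm
        rw [hext m]
        rw [show opJ1 (Ed d) m = Ed d m + if m % 2 = 0 then Ed d (m+1) else 0 from rfl]
        rw [show Ed d m = 0 from if_neg (by omega)]
        by_cases hvp : m % 2 = 0
        · rw [if_pos hvp, show Ed d (m+1) = 0 from if_neg (by omega)]; ring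
        · rw [if_neg hvp]; ring
      · rw [hext j]
        rw [show opJ1 (Ed d) j = Ed d j + if j % 2 = 0 then Ed d (j+1) else 0 from rfl]
        rw [show Ed d j = 1 from if_pos hjd, if_pos (by omega),
          show Ed d (j+1) = 0 from if_neg (by omega)]
        ring


noncomputable def CpM (d : ℕ) : Matrix (Fin (d+1)) (Fin (d+1)) ℂ :=
  Matrix.of fun i j => cpcol d (j : ℕ) i

noncomputable def CmM (d : ℕ) : Matrix (Fin (d+1)) (Fin (d+1)) ℂ :=
  Matrix.of fun i j => cmcol d (j : ℕ) i

lemma sum_col_single {n : ℕ} (g : Fin n → ℂ) (Dc : Fin n → ℂ) (k0 : Fin n)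
    (hzero : ∀ k, k ≠ k0 → Dc k = 0) : (∑ k, g k * Dc k) = g k0 * Dc k0 := by
  rw [Finset.sum_eq_single k0]
  · intro k _ hk
    rw [hzero k hk, mul_zero]
  · intro h; exact absurd (Finset.mem_univ _) h

lemma D1_apply (d : ℕ) (a b : Fin (d+1)) : D1 d a b =
    if (a : ℕ) % 2 = 0 ∧ (b : ℕ) = (a : ℕ) + 1 then (1 : ℂ)
    else if (a : ℕ) % 2 = 1 ∧ (a : ℕ) = (b : ℕ) + 1 then -1
    else if (a : ℕ) = (b : ℕ) ∧ (a : ℕ) = d ∧ d % 2 = 0 then 1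
    else 0 := by
  simp only [D1, Matrix.of_apply, Fin.ext_iff]

lemma D2_apply (d : ℕ) (a b : Fin (d+1)) : D2 d a b =
    if (a : ℕ) = 0 ∧ (b : ℕ) = 0 then (1 : ℂ)
    else if (a : ℕ) % 2 = 1 ∧ (b : ℕ) = (a : ℕ) + 1 then 1
    else if (b : ℕ) % 2 = 1 ∧ (a : ℕ) = (b : ℕ) + 1 then -1
    else if (a : ℕ) = (b : ℕ) ∧ (a : ℕ) = d ∧ d % 2 = 1 then -1
    else 0 := by
  simp only [D2, Matrix.of_apply, Fin.ext_iff]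

lemma eq1 (d : ℕ) (hd : 2 ≤ d) : J1 d * CpM d = CmM d * D1 d := by
  ext i j
  rw [Matrix.mul_apply, Matrix.mul_apply]
  have hL : (∑ k, J1 d i k * CpM d k j) = (J1 d *ᵥ cpcol d (j:ℕ)) i := rfl
  rw [hL]
  have hjl : (j:ℕ) < d + 1 := j.isLt
  by_cases hp : (j:ℕ) % 2 = 1
  · rw [sum_col_single (fun k => CmM d i k) (fun k => D1 d k j) ⟨(j:ℕ)-1, by omega⟩ ?_]
    · have hv : ((⟨(j:ℕ)-1, by omega⟩ : Fin (d+1)) : ℕ) = (j:ℕ)-1 := rfl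
      have hD : D1 d ⟨(j:ℕ)-1, by omega⟩ j = 1 := by
        rw [D1_apply, hv, if_pos ⟨by omega, by omega⟩]
      rw [hD, mul_one]
      show _ = cmcol d ((j:ℕ)-1) i
      rw [cmcol, if_neg (by omega), if_pos (by omega), show (j:ℕ) - 1 + 1 = (j:ℕ) by omega]
    · intro k hk
      have hkv : (k:ℕ) ≠ (j:ℕ) - 1 := fun hc => hk (Fin.ext hc)
      have hkl := k.isLt
      show D1 d k j = 0
      rw [D1_apply]
      split_ifs <;> first | rfl | (exfalso; omega)
  · by_cases hjd : (j:ℕ) = d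
    · rw [sum_col_single (fun k => CmM d i k) (fun k => D1 d k j) j ?_]
      · have hD : D1 d j j = 1 := by
          rw [D1_apply, if_neg (by omega), if_neg (by omega), if_pos ⟨rfl, hjd, by omega⟩]
        rw [hD, mul_one]
        show _ = cmcol d (j:ℕ) i
        rw [cmcol, if_neg hp, if_neg (by omega), hjd]
      · intro k hk
        have hkv : (k:ℕ) ≠ (j:ℕ) := fun hc => hk (Fin.ext hc)
        have hkl := k.isLt
        show D1 d k j = 0
        rw [D1_apply]
        split_ifs <;> first | rfl | (exfalso; omega)
    · rw [sum_col_single (fun k => CmM d i k) (fun k => D1 d k j) ⟨(j:ℕ)+1, by omega⟩ ?_]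
      · have hv : ((⟨(j:ℕ)+1, by omega⟩ : Fin (d+1)) : ℕ) = (j:ℕ)+1 := rfl
        have hD : D1 d ⟨(j:ℕ)+1, by omega⟩ j = -1 := by
          rw [D1_apply, hv, if_neg (by omega), if_pos ⟨by omega, by omega⟩]
        rw [hD]
        show (J1 d *ᵥ cpcol d (j:ℕ)) i = cmcol d ((j:ℕ)+1) i * (-1)
        rw [cmcol, if_pos (by omega), show (j:ℕ) + 1 - 1 = (j:ℕ) by omega]
        simp
      · intro k hk
        have hkv : (k:ℕ) ≠ (j:ℕ) + 1 := fun hc => hk (Fin.ext hc)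
        have hkl := k.isLt
        show D1 d k j = 0
        rw [D1_apply]
        split_ifs <;> first | rfl | (exfalso; omega)

lemma eq2 (d : ℕ) (hd : 2 ≤ d) : J2 d * CmM d = CpM d * D2 d := by
  ext i j
  rw [Matrix.mul_apply, Matrix.mul_apply]
  have hL : (∑ k, J2 d i k * CmM d k j) = (J2 d *ᵥ cmcol d (j:ℕ)) i := rfl
  rw [hL]
  have hjl : (j:ℕ) < d + 1 := j.isLt
  by_cases hp : (j:ℕ) % 2 = 1
  · have hLHS : J2 d *ᵥ cmcol d (j:ℕ) = -(Ai d ^ ((d - (j:ℕ))/2) *ᵥ ed d) := by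
      rw [cmcol, if_pos hp, Matrix.mulVec_neg]
      congr 1
      rw [Matrix.mulVec_mulVec, cpcol, if_neg (by omega), Matrix.mulVec_mulVec,
        show J2 d * J1 d = Am d from rfl,
        Am_mul_Ai_pow d (show 1 ≤ (d + 1 - ((j:ℕ)-1))/2 by omega),
        show (d + 1 - ((j:ℕ)-1))/2 - 1 = (d - (j:ℕ))/2 by omega]
    rw [hLHS]
    by_cases hjd : (j:ℕ) = d
    · rw [sum_col_single (fun k => CpM d i k) (fun k => D2 d k j) j ?_]
      · have hD : D2 d j j = -1 := by
          rw [D2_apply, if_neg (by omega), if_neg (by omega), if_neg (by omega),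
            if_pos ⟨rfl, hjd, by omega⟩]
        rw [hD]
        show _ = cpcol d (j:ℕ) i * (-1)
        rw [cpcol, if_pos hp, show (d + 1 - (j:ℕ))/2 = 0 by omega, pow_zero,
          show (d - (j:ℕ))/2 = 0 by omega, pow_zero]
        simp
      · intro k hk
        have hkv : (k:ℕ) ≠ (j:ℕ) := fun hc => hk (Fin.ext hc)
        have hkl := k.isLt
        show D2 d k j = 0
        rw [D2_apply]
        split_ifs <;> first | rfl | (exfalso; omega)
    · rw [sum_col_single (fun k => CpM d i k) (fun k => D2 d k j) ⟨(j:ℕ)+1, by omega⟩ ?_]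
      · have hv : ((⟨(j:ℕ)+1, by omega⟩ : Fin (d+1)) : ℕ) = (j:ℕ)+1 := rfl
        have hD : D2 d ⟨(j:ℕ)+1, by omega⟩ j = -1 := by
          rw [D2_apply, hv, if_neg (by omega), if_neg (by omega), if_pos ⟨hp, by omega⟩]
        rw [hD]
        show _ = cpcol d ((j:ℕ)+1) i * (-1)
        rw [cpcol, if_neg (by omega), show (d + 1 - ((j:ℕ)+1))/2 = (d - (j:ℕ))/2 by omega]
        simp
      · intro k hk
        have hkv : (k:ℕ) ≠ (j:ℕ) + 1 := fun hc => hk (Fin.ext hc)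
        have hkl := k.isLt
        show D2 d k j = 0
        rw [D2_apply]
        split_ifs <;> first | rfl | (exfalso; omega)
  · have hLHS : J2 d *ᵥ cmcol d (j:ℕ) = Am d ^ ((d + 2 - (j:ℕ))/2) *ᵥ ed d := by
      by_cases hjd : (j:ℕ) = d
      · rw [cmcol, if_neg hp, if_neg (by omega), cpcol_d_even (by omega),
          Matrix.mulVec_mulVec, show J2 d * J1 d = Am d from rfl,
          show (d + 2 - (j:ℕ))/2 = 1 by omega, pow_one]
      · rw [cmcol, if_neg hp, if_pos (by omega), Matrix.mulVec_mulVec, cpcol,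
          if_pos (by omega), Matrix.mulVec_mulVec, show J2 d * J1 d = Am d from rfl,
          ← pow_succ', show (d + 1 - ((j:ℕ)+1))/2 + 1 = (d + 2 - (j:ℕ))/2 by omega]
    rw [hLHS]
    by_cases hj0 : (j:ℕ) = 0
    · rw [sum_col_single (fun k => CpM d i k) (fun k => D2 d k j) ⟨0, by omega⟩ ?_]
      · have hv : ((⟨0, by omega⟩ : Fin (d+1)) : ℕ) = 0 := rfl
        have hD : D2 d ⟨0, by omega⟩ j = 1 := by
          rw [D2_apply, hv, if_pos ⟨rfl, hj0⟩]
        rw [hD, mul_one]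
        show _ = cpcol d (0:ℕ) i
        rw [cpcol, if_neg (by omega), hj0,
          show Am d ^ ((d + 2 - 0)/2) = Ai d ^ ((d + 1 - 0)/2) from pow_split d (by omega)]
      · intro k hk
        have hkv : (k:ℕ) ≠ 0 := fun hc => hk (Fin.ext hc)
        have hkl := k.isLt
        show D2 d k j = 0
        rw [D2_apply]
        split_ifs <;> first | rfl | (exfalso; omega)
    · rw [sum_col_single (fun k => CpM d i k) (fun k => D2 d k j) ⟨(j:ℕ)-1, by omega⟩ ?_]
      · have hv : ((⟨(j:ℕ)-1, by omega⟩ : Fin (d+1)) : ℕ) = (j:ℕ)-1 := rfl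
        have hD : D2 d ⟨(j:ℕ)-1, by omega⟩ j = 1 := by
          rw [D2_apply, hv, if_neg (by omega), if_pos ⟨by omega, by omega⟩]
        rw [hD, mul_one]
        show _ = cpcol d ((j:ℕ)-1) i
        rw [cpcol, if_pos (by omega),
          show (d + 1 - ((j:ℕ)-1))/2 = (d + 2 - (j:ℕ))/2 by omega]
      · intro k hk
        have hkv : (k:ℕ) ≠ (j:ℕ) - 1 := fun hc => hk (Fin.ext hc)
        have hkl := k.isLt
        show D2 d k j = 0
        rw [D2_apply]
        split_ifs <;> first | rfl | (exfalso; omega)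

end Stmt9

/-- Existence of the lower-triangular unipotent matrices `C⁺`, `C⁻` used to open the
lenses in the intersection region of the steepest descent analysis. -/
theorem stmt9 (d : ℕ) (hd : 2 ≤ d) :
    ∃ Cp Cm : Matrix (Fin (d + 1)) (Fin (d + 1)) ℂ,
      (∀ i j : Fin (d + 1), (i : ℕ) < (j : ℕ) → Cp i j = 0) ∧
      (∀ i : Fin (d + 1), Cp i i = 1) ∧
      (∀ i j : Fin (d + 1), (i : ℕ) < (j : ℕ) → Cm i j = 0) ∧
      (∀ i : Fin (d + 1), Cm i i = 1) ∧
      J1 d * Cp = Cm * D1 d ∧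
      J2 d * Cm = Cp * D2 d := by
  have hd1 : 1 ≤ d := by omega
  refine ⟨Stmt9.CpM d, Stmt9.CmM d, ?_, ?_, ?_, ?_, Stmt9.eq1 d hd, Stmt9.eq2 d hd⟩
  · intro i j hij
    have h := (Stmt9.cpcol_top hd1 (Nat.lt_succ_iff.mp j.isLt)).1 (i : ℕ) hij
    rw [Stmt9.ext_apply] at h
    exact h
  · intro i
    have h := (Stmt9.cpcol_top hd1 (Nat.lt_succ_iff.mp i.isLt)).2
    rw [Stmt9.ext_apply] at h
    exact h
  · intro i j hij
    have h := (Stmt9.cmcol_top hd1 (Nat.lt_succ_iff.mp j.isLt)).1 (i : ℕ) hij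
    rw [Stmt9.ext_apply] at h
    exact h
  · intro i
    have h := (Stmt9.cmcol_top hd1 (Nat.lt_succ_iff.mp i.isLt)).2
    rw [Stmt9.ext_apply] at h
    exact h
end

section
/- Let d ≥ 2 be an integer and ω = e^{2πi/(d+1)}. Define e⁺_{k,n} as the k-th elementary symmetric polynomial evaluated at the first n terms of the sequence (ω, ω^{−1}, ω², ω^{−2}, ω³, …) (term 2j−1 is ω^{j}, term 2j is ω^{−j}), and e⁻_{k,n} as the k-th elementary symmetric polynomial evaluated at the first n terms of (ω^{−1}, ω, ω^{−2}, ω², …) (term 2j−1 is ω^{−j}, term 2j is ω^{j}), with the conventions e^±_{0,n} = 1 and e^±_{k,n} = 0 for k < 0 or k > n. Let R⁺ and R⁻ be the d×d matrices with entries, for 1 ≤ j, k ≤ d: (R⁺)_{j,k} = (−1)^{1+⌊j/2⌋+⌈k/2⌉}·e⁺_{⌊k/2⌋+(j−1)/2, k−1} if j is odd and (−1)^{1+⌊j/2⌋+⌈k/2⌉}·e⁺_{⌊k/2⌋−j/2, k−1} if j is even; (R⁻)_{j,k} = (−1)^{⌊j/2⌋+⌊k/2⌋}·e⁻_{⌊k/2⌋+(j−1)/2,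 k−1} if j is odd and (−1)^{⌊j/2⌋+⌊k/2⌋}·e⁻_{⌊k/2⌋−j/2, k−1} if j is even. Let A₃ = diag(1, σ₁, …, σ₁, 0) − ∑_{j=1}^{d} E_{j,d} if d is even and A₃ = diag(1, σ₁, …, σ₁) if d is odd, and A₂ = diag(σ₁, …, σ₁) if d is even and A₂ = diag(σ₁, …, σ₁, 0) − ∑_{j=1}^{d} E_{j,d} if d is odd. Then: A₃ · R⁺ = R⁻ · ( I − ∑_{j=1}^{⌊(d−1)/2⌋} E_{2j+1,2j} ) and A₂ · R⁻ = R⁺ · ( Λ′ − ∑_{j=1}^{⌊d/2⌋} E_{2j,2j−1} ), where Λ′ is the diagonal matrix with Λ′_{2j−1,2j−1} = ω^{j} and Λ′_{2j,2j} = ω^{−j}. -/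
open Matrix

/-- The sequence `(ω, ω^{-1}, ω², ω^{-2}, ω³, …)`: term `2j-1` is `ω^j`, term `2j` is
`ω^{-j}` (1-based argument). -/
noncomputable def sp (d : ℕ) (m : ℕ) : ℂ :=
  if m % 2 = 1 then omC d ^ ((m + 1) / 2) else (omC d ^ (m / 2))⁻¹

/-- The sequence `(ω^{-1}, ω, ω^{-2}, ω², …)`: term `2j-1` is `ω^{-j}`, term `2j` is
`ω^{j}`. -/
noncomputable def sm (d : ℕ) (m : ℕ) : ℂ :=
  if m % 2 = 1 then (omC d ^ ((m + 1) / 2))⁻¹ else omC d ^ (m / 2)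

/-- `k`-th elementary symmetric polynomial in the first `n` terms of the sequence `f`,
with the conventions that it is `1` for `k = 0` and `0` for `k < 0` or `k > n`. -/
noncomputable def esymZ (f : ℕ → ℂ) (n : ℕ) (k : ℤ) : ℂ :=
  if 0 ≤ k then ∑ A ∈ Finset.powersetCard k.toNat (Finset.Icc 1 n), ∏ i ∈ A, f i else 0

/-- The matrix `R⁺` (0-based Lean indices `i`, `j` correspond to 1-based paper indices
`J = i+1`, `K = j+1`). -/
noncomputable def Rp (d : ℕ) : Matrix (Fin d) (Fin d) ℂ :=
  Matrix.of fun i j =>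
    (-1 : ℂ) ^ (1 + ((i : ℕ) + 1) / 2 + ((j : ℕ) + 2) / 2) *
      (if (i : ℕ) % 2 = 0 then
        esymZ (sp d) (j : ℕ) (((((j : ℕ) + 1) / 2 : ℕ) : ℤ) + (((i : ℕ) / 2 : ℕ) : ℤ))
      else
        esymZ (sp d) (j : ℕ) (((((j : ℕ) + 1) / 2 : ℕ) : ℤ) - ((((i : ℕ) + 1) / 2 : ℕ) : ℤ)))

/-- The matrix `R⁻`. -/
noncomputable def Rm (d : ℕ) : Matrix (Fin d) (Fin d) ℂ :=
  Matrix.of fun i j =>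
    (-1 : ℂ) ^ (((i : ℕ) + 1) / 2 + ((j : ℕ) + 1) / 2) *
      (if (i : ℕ) % 2 = 0 then
        esymZ (sm d) (j : ℕ) (((((j : ℕ) + 1) / 2 : ℕ) : ℤ) + (((i : ℕ) / 2 : ℕ) : ℤ))
      else
        esymZ (sm d) (j : ℕ) (((((j : ℕ) + 1) / 2 : ℕ) : ℤ) - ((((i : ℕ) + 1) / 2 : ℕ) : ℤ)))

/-- `A₃ = diag(1, σ₁, …, σ₁, 0) - ∑_{j=1}^d E_{j,d}` if `d` is even,
`A₃ = diag(1, σ₁, …, σ₁)` if `d` is odd. -/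
noncomputable def A3 (d : ℕ) : Matrix (Fin d) (Fin d) ℂ :=
  Matrix.of fun i j =>
    (if (i : ℕ) = 0 ∧ (j : ℕ) = 0 then (1 : ℂ)
      else if (i : ℕ) % 2 = 1 ∧ (j : ℕ) = (i : ℕ) + 1 then 1
      else if (j : ℕ) % 2 = 1 ∧ (i : ℕ) = (j : ℕ) + 1 then 1
      else 0)
    - (if d % 2 = 0 ∧ (j : ℕ) = d - 1 then 1 else 0)

/-- `A₂ = diag(σ₁, …, σ₁)` if `d` is even,
`A₂ = diag(σ₁, …, σ₁, 0) - ∑_{j=1}^d E_{j,d}` if `d` is odd. -/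
noncomputable def A2 (d : ℕ) : Matrix (Fin d) (Fin d) ℂ :=
  Matrix.of fun i j =>
    (if (i : ℕ) % 2 = 0 ∧ (j : ℕ) = (i : ℕ) + 1 then (1 : ℂ)
      else if (j : ℕ) % 2 = 0 ∧ (i : ℕ) = (j : ℕ) + 1 then 1
      else 0)
    - (if d % 2 = 1 ∧ (j : ℕ) = d - 1 then 1 else 0)

/-- `G₁ = I - ∑_{j=1}^{⌊(d-1)/2⌋} E_{2j+1,2j}`. -/
noncomputable def G1 (d : ℕ) : Matrix (Fin d) (Fin d) ℂ :=
  Matrix.of fun i j =>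
    (if i = j then (1 : ℂ) else 0) -
      (if (i : ℕ) % 2 = 0 ∧ (i : ℕ) = (j : ℕ) + 1 then 1 else 0)

/-- `G₂ = Λ' - ∑_{j=1}^{⌊d/2⌋} E_{2j,2j-1}`, where `Λ'` is diagonal with
`Λ'_{2j-1,2j-1} = ω^j` and `Λ'_{2j,2j} = ω^{-j}`. -/
noncomputable def G2 (d : ℕ) : Matrix (Fin d) (Fin d) ℂ :=
  Matrix.of fun i j =>
    (if i = j then
        (if (i : ℕ) % 2 = 0 then omC d ^ ((i : ℕ) / 2 + 1)
          else (omC d ^ (((i : ℕ) + 1) / 2))⁻¹)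
      else 0) -
      (if (i : ℕ) % 2 = 1 ∧ (i : ℕ) = (j : ℕ) + 1 then 1 else 0)

lemma esymZ_neg (f : ℕ → ℂ) (n : ℕ) {k : ℤ} (h : k < 0) : esymZ f n k = 0 :=
  if_neg (not_le.2 h)

lemma esymZ_of_nonneg (f : ℕ → ℂ) (n : ℕ) {k : ℤ} (h : 0 ≤ k) :
    esymZ f n k = ∑ A ∈ Finset.powersetCard k.toNat (Finset.Icc 1 n), ∏ i ∈ A, f i :=
  if_pos h

lemma esymZ_zero (f : ℕ → ℂ) (n : ℕ) : esymZ f n 0 = 1 := by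
  simp [esymZ]

lemma esymZ_gt (f : ℕ → ℂ) {n : ℕ} {k : ℤ} (h : (n : ℤ) < k) : esymZ f n k = 0 := by
  have h0 : (0:ℤ) ≤ k := le_trans (Int.ofNat_nonneg n) h.le
  rw [esymZ_of_nonneg f n h0]
  have hc : (Finset.Icc 1 n).card < k.toNat := by
    rw [Nat.card_Icc]; omega
  rw [Finset.powersetCard_eq_empty.2 hc, Finset.sum_empty]

lemma esymZ_succ (f : ℕ → ℂ) (n : ℕ) (k : ℤ) :
    esymZ f (n + 1) k = esymZ f n k + f (n + 1) * esymZ f n (k - 1) := by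
  rcases lt_or_ge k 0 with hk | hk
  · rw [esymZ_neg f _ hk, esymZ_neg f _ hk, esymZ_neg f _ (by omega), mul_zero, add_zero]
  rcases eq_or_lt_of_le hk with hk0 | hk1
  · rw [← hk0, esymZ_zero, esymZ_zero, esymZ_neg f _ (by omega), mul_zero, add_zero]
  have h1 : (1:ℤ) ≤ k := hk1
  obtain ⟨m, hm⟩ : ∃ m : ℕ, k = (m : ℤ) + 1 := ⟨(k - 1).toNat, by omega⟩
  subst hm
  have htn : ((m : ℤ) + 1).toNat = m + 1 := by omega
  have htn' : ((m : ℤ) + 1 - 1).toNat = m := by omega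
  rw [esymZ_of_nonneg f _ hk, esymZ_of_nonneg f _ hk,
    esymZ_of_nonneg f _ (by omega : (0:ℤ) ≤ (m:ℤ) + 1 - 1), htn, htn']
  have hnot : (n + 1) ∉ Finset.Icc 1 n := by simp
  have hIcc : Finset.Icc 1 (n + 1) = insert (n + 1) (Finset.Icc 1 n) := by
    ext x; simp [Finset.mem_Icc, Finset.mem_insert]; omega
  rw [hIcc, Finset.powersetCard_succ_insert hnot, Finset.sum_union]
  · congr 1
    rw [Finset.sum_image]
    · rw [Finset.mul_sum]
      refine Finset.sum_congr rfl fun A hA => ?_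
      have hxA : (n + 1) ∉ A := fun hx =>
        hnot ((Finset.mem_powersetCard.1 hA).1 hx)
      rw [Finset.prod_insert hxA]
    · intro A hA B hB hAB
      have hxA : (n + 1) ∉ A := fun hx => hnot ((Finset.mem_powersetCard.1 hA).1 hx)
      have hxB : (n + 1) ∉ B := fun hx => hnot ((Finset.mem_powersetCard.1 hB).1 hx)
      have h2 := congrArg (fun S => Finset.erase S (n+1)) hAB
      simpa [Finset.erase_insert hxA, Finset.erase_insert hxB] using h2
  · rw [Finset.disjoint_right]
    intro A hA hA'
    obtain ⟨B, hB, rfl⟩ := Finset.mem_image.1 hA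
    have : (n+1) ∈ insert (n+1) B := Finset.mem_insert_self _ _
    exact hnot ((Finset.mem_powersetCard.1 hA').1 this)

lemma esymZ_reflect (f g : ℕ → ℂ) (n : ℕ)
    (h : ∀ m ∈ Finset.Icc 1 n, f m * g m = 1) (r : ℤ) :
    esymZ f n ((n : ℤ) - r) = (∏ m ∈ Finset.Icc 1 n, f m) * esymZ g n r := by
  rcases lt_or_ge r 0 with hr | hr
  · rw [esymZ_neg g n hr, esymZ_gt f (by omega), mul_zero]
  rcases lt_or_ge (n : ℤ) r with hr2 | hr2
  · rw [esymZ_gt g hr2, esymZ_neg f n (by omega), mul_zero]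
  rw [esymZ_of_nonneg f n (by omega), esymZ_of_nonneg g n hr, Finset.mul_sum]
  have hcard : (Finset.Icc 1 n).card = n := by rw [Nat.card_Icc]; omega
  have hts : ((n : ℤ) - r).toNat = n - r.toNat := by omega
  rw [hts]
  refine Finset.sum_nbij' (fun A => Finset.Icc 1 n \ A) (fun B => Finset.Icc 1 n \ B)
    ?_ ?_ ?_ ?_ ?_
  · intro A hA
    rw [Finset.mem_powersetCard] at hA ⊢
    exact ⟨Finset.sdiff_subset, by rw [Finset.card_sdiff_of_subset hA.1, hcard, hA.2]; omega⟩
  · intro B hB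
    rw [Finset.mem_powersetCard] at hB ⊢
    exact ⟨Finset.sdiff_subset, by rw [Finset.card_sdiff_of_subset hB.1, hcard, hB.2]⟩
  · intro A hA
    exact Finset.sdiff_sdiff_eq_self (Finset.mem_powersetCard.1 hA).1
  · intro B hB
    exact Finset.sdiff_sdiff_eq_self (Finset.mem_powersetCard.1 hB).1
  · intro A hA
    have hsub : A ⊆ Finset.Icc 1 n := (Finset.mem_powersetCard.1 hA).1
    have h1 : ∏ i ∈ Finset.Icc 1 n \ A, (f i * g i) = 1 :=
      Finset.prod_eq_one fun m hm => h m (Finset.sdiff_subset hm)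
    rw [Finset.prod_mul_distrib] at h1
    rw [← Finset.prod_sdiff hsub]
    linear_combination (-(∏ i ∈ A, f i)) * h1

lemma esymZ_eq_esymm (f : ℕ → ℂ) (n : ℕ) {r : ℤ} (hr : 0 ≤ r) :
    esymZ f n r = ((Finset.Icc 1 n).val.map f).esymm r.toNat := by
  rw [esymZ_of_nonneg f n hr, Finset.esymm_map_val]

lemma esymZ_reindex (f : ℕ → ℂ) (σ : ℕ → ℕ) (n : ℕ)
    (hmap : ∀ m ∈ Finset.Icc 1 n, σ m ∈ Finset.Icc 1 n)
    (hinj : Set.InjOn σ (Finset.Icc 1 n)) (r : ℤ) :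
    esymZ (fun m => f (σ m)) n r = esymZ f n r := by
  rcases lt_or_ge r 0 with hr | hr
  · rw [esymZ_neg _ _ hr, esymZ_neg _ _ hr]
  have himg : Finset.image σ (Finset.Icc 1 n) = Finset.Icc 1 n :=
    Finset.eq_of_subset_of_card_le (fun x hx => by
      obtain ⟨m, hm, rfl⟩ := Finset.mem_image.1 hx; exact hmap m hm)
      (le_of_eq (Finset.card_image_of_injOn hinj).symm)
  have hval : (Finset.Icc 1 n).val.map σ = (Finset.Icc 1 n).val := by
    rw [← Finset.image_val_of_injOn hinj, himg]
  rw [esymZ_eq_esymm _ _ hr, esymZ_eq_esymm _ _ hr]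
  conv_rhs => rw [← hval]
  rw [Multiset.map_map]
  rfl
lemma omC_prim (d : ℕ) : IsPrimitiveRoot (omC d) (d + 1) := by
  have h := Complex.isPrimitiveRoot_exp (d + 1) (Nat.succ_ne_zero d)
  rwa [show (((d + 1 : ℕ) : ℂ)) = (d : ℂ) + 1 by push_cast; ring] at h

lemma omC_ne_zero (d : ℕ) : omC d ≠ 0 := Complex.exp_ne_zero _

lemma omC_pow_succ (d : ℕ) : omC d ^ (d + 1) = 1 := (omC_prim d).pow_eq_one

lemma omC_pow_ne_one (d : ℕ) {r : ℕ} (h1 : 1 ≤ r) (h2 : r ≤ d) : omC d ^ r ≠ 1 :=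
  (omC_prim d).pow_ne_one_of_pos_of_lt (by omega) (by omega)

lemma omC_half (d : ℕ) (hd : d % 2 = 1) : omC d ^ ((d + 1) / 2) = -1 := by
  have h2 : (omC d ^ ((d + 1) / 2)) ^ 2 = 1 := by
    rw [← pow_mul, show (d + 1) / 2 * 2 = d + 1 by omega, omC_pow_succ]
  rcases sq_eq_one_iff.mp h2 with h | h
  · exact absurd h (omC_pow_ne_one d (by omega) (by omega))
  · exact h

lemma sp_mul_sm (d m : ℕ) : sp d m * sm d m = 1 := by
  unfold sp sm
  split_ifs with h
  · exact mul_inv_cancel₀ (pow_ne_zero _ (omC_ne_zero d))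
  · exact inv_mul_cancel₀ (pow_ne_zero _ (omC_ne_zero d))

lemma prod_sp (d n : ℕ) :
    ∏ m ∈ Finset.Icc 1 n, sp d m = if n % 2 = 1 then omC d ^ ((n + 1) / 2) else 1 := by
  induction n with
  | zero => simp
  | succ n ih =>
    rw [Finset.prod_Icc_succ_top (by omega : 1 ≤ n + 1), ih]
    rcases Nat.even_or_odd n with he | ho
    · have h1 : n % 2 = 0 := Nat.even_iff.1 he
      have h2 : (n + 1) % 2 = 1 := by omega
      rw [if_neg (by omega), if_pos h2, one_mul]
      unfold sp
      rw [if_pos h2]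
    · have h1 : n % 2 = 1 := Nat.odd_iff.1 ho
      have h2 : (n + 1) % 2 = 0 := by omega
      rw [if_pos h1, if_neg (by omega)]
      unfold sp
      rw [if_neg (by omega), show (n + 1) / 2 = (n + 1 + 1) / 2 by omega]
      exact mul_inv_cancel₀ (pow_ne_zero _ (omC_ne_zero d))

lemma esymZ_congr {f g : ℕ → ℂ} (n : ℕ) (h : ∀ m ∈ Finset.Icc 1 n, f m = g m) (r : ℤ) :
    esymZ f n r = esymZ g n r := by
  rcases lt_or_ge r 0 with hr | hr
  · rw [esymZ_neg _ _ hr, esymZ_neg _ _ hr]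
  rw [esymZ_of_nonneg _ _ hr, esymZ_of_nonneg _ _ hr]
  refine Finset.sum_congr rfl fun A hA => Finset.prod_congr rfl fun m hm => ?_
  exact h m ((Finset.mem_powersetCard.1 hA).1 hm)

lemma esymZ_smul (f : ℕ → ℂ) (c : ℂ) (n : ℕ) {r : ℤ} (hr : 0 ≤ r) :
    esymZ (fun m => c * f m) n r = c ^ r.toNat * esymZ f n r := by
  rw [esymZ_of_nonneg _ _ hr, esymZ_of_nonneg _ _ hr, Finset.mul_sum]
  refine Finset.sum_congr rfl fun A hA => ?_
  rw [Finset.prod_mul_distrib, Finset.prod_const, (Finset.mem_powersetCard.1 hA).2]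

lemma esymZ_omC_full (d : ℕ) {r : ℤ} (h0 : 0 ≤ r) (hr : r ≤ (d : ℤ)) :
    esymZ (fun m => omC d ^ m) d r = (-1 : ℂ) ^ r.toNat := by
  set h : ℕ → ℂ := fun m => omC d ^ m with hh
  have key : ∀ s : ℕ, 1 ≤ s → s ≤ d → esymZ h (d + 1) (s : ℤ) = 0 := by
    intro s hs1 hs2
    set τ : ℕ → ℕ := fun m => m % (d + 1) + 1 with hτ
    have hmap : ∀ m ∈ Finset.Icc 1 (d + 1), τ m ∈ Finset.Icc 1 (d + 1) := by
      intro m hm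
      simp only [Finset.mem_Icc] at hm ⊢
      simp only [hτ]
      have hlt : m % (d + 1) < d + 1 := Nat.mod_lt _ (by omega)
      omega
    have hinj : Set.InjOn τ (Finset.Icc 1 (d + 1)) := by
      intro a ha b hb hab
      simp only [Finset.coe_Icc, Set.mem_Icc] at ha hb
      simp only [hτ] at hab
      rcases Nat.lt_or_ge a (d + 1) with h1 | h1 <;> rcases Nat.lt_or_ge b (d + 1) with h2 | h2
      · rw [Nat.mod_eq_of_lt h1, Nat.mod_eq_of_lt h2] at hab; omega
      · have hb' : b = d + 1 := by omega
        rw [Nat.mod_eq_of_lt h1, hb', Nat.mod_self] at hab; omega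
      · have ha' : a = d + 1 := by omega
        rw [Nat.mod_eq_of_lt h2, ha', Nat.mod_self] at hab; omega
      · omega
    have hcomp : ∀ m ∈ Finset.Icc 1 (d + 1), h (τ m) = omC d * h m := by
      intro m hm
      simp only [Finset.mem_Icc] at hm
      simp only [hh, hτ]
      rcases Nat.lt_or_ge m (d + 1) with h1 | h1
      · rw [Nat.mod_eq_of_lt h1, pow_succ, mul_comm]
      · have hm' : m = d + 1 := by omega
        rw [hm', Nat.mod_self, zero_add, pow_one, omC_pow_succ, mul_one]
    have e1 : esymZ h (d + 1) (s : ℤ) = omC d ^ s * esymZ h (d + 1) (s : ℤ) := by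
      calc esymZ h (d + 1) (s : ℤ) = esymZ (fun m => h (τ m)) (d + 1) (s : ℤ) :=
            (esymZ_reindex h τ (d + 1) hmap hinj _).symm
        _ = esymZ (fun m => omC d * h m) (d + 1) (s : ℤ) := esymZ_congr _ hcomp _
        _ = omC d ^ (s : ℤ).toNat * esymZ h (d + 1) (s : ℤ) :=
            esymZ_smul h (omC d) (d + 1) (by omega)
        _ = omC d ^ s * esymZ h (d + 1) (s : ℤ) := by rw [Int.toNat_natCast]
    have hne : omC d ^ s ≠ 1 := omC_pow_ne_one d hs1 hs2
    have h2 : (omC d ^ s - 1) * esymZ h (d + 1) (s : ℤ) = 0 := by linear_combination -e1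
    rcases mul_eq_zero.1 h2 with h | h
    · exact absurd (by linear_combination h) hne
    · exact h
  have rec1 : ∀ s : ℕ, 1 ≤ s → s ≤ d → esymZ h d (s : ℤ) = - esymZ h d ((s : ℤ) - 1) := by
    intro s hs1 hs2
    have h1 := esymZ_succ h d (s : ℤ)
    rw [key s hs1 hs2] at h1
    have hω : h (d + 1) = 1 := omC_pow_succ d
    rw [hω, one_mul] at h1
    linear_combination -h1
  have final : ∀ s : ℕ, s ≤ d → esymZ h d (s : ℤ) = (-1 : ℂ) ^ s := by
    intro s
    induction s with
    | zero => intro _; simpa using esymZ_zero h d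
    | succ s ih =>
      intro hsd
      have h1 := rec1 (s + 1) (by omega) hsd
      rw [show ((s + 1 : ℕ) : ℤ) - 1 = (s : ℤ) by push_cast; ring] at h1
      rw [h1, ih (by omega)]
      ring
  obtain ⟨s, rfl⟩ : ∃ s : ℕ, r = (s : ℤ) := ⟨r.toNat, by omega⟩
  rw [final s (by omega), Int.toNat_natCast]

lemma esymZ_sp_full (d : ℕ) {r : ℤ} (h0 : 0 ≤ r) (hr : r ≤ (d : ℤ)) :
    esymZ (sp d) d r = (-1 : ℂ) ^ r.toNat := by
  set σf : ℕ → ℕ := fun m => if m % 2 = 1 then (m + 1) / 2 else d + 1 - m / 2 with hσ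
  have hmap : ∀ m ∈ Finset.Icc 1 d, σf m ∈ Finset.Icc 1 d := by
    intro m hm
    simp only [Finset.mem_Icc] at hm ⊢
    simp only [hσ]
    split_ifs <;> omega
  have hinj : Set.InjOn σf (Finset.Icc 1 d) := by
    intro x hx y hy hxy
    simp only [Finset.coe_Icc, Set.mem_Icc] at hx hy
    simp only [hσ] at hxy
    split_ifs at hxy <;> omega
  have hcongr : ∀ m ∈ Finset.Icc 1 d, sp d m = (fun m => omC d ^ m) (σf m) := by
    intro m hm
    simp only [Finset.mem_Icc] at hm
    simp only [hσ, sp]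
    split_ifs with h
    · rfl
    · refine inv_eq_of_mul_eq_one_right ?_
      rw [← pow_add, show m / 2 + (d + 1 - m / 2) = d + 1 by omega, omC_pow_succ]
  calc esymZ (sp d) d r = esymZ (fun m => omC d ^ (σf m)) d r := esymZ_congr d hcongr r
    _ = esymZ (fun m => omC d ^ m) d r := esymZ_reindex _ σf d hmap hinj r
    _ = (-1 : ℂ) ^ r.toNat := esymZ_omC_full d h0 hr

lemma master_sp (d : ℕ) (hd : 1 ≤ d) {r : ℤ} (h0 : 0 ≤ r) (hr : r ≤ (d : ℤ)) :
    esymZ (sp d) (d - 1) r + sp d d * esymZ (sp d) (d - 1) (r - 1) = (-1 : ℂ) ^ r.toNat := by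
  have h1 := esymZ_succ (sp d) (d - 1) r
  rw [show d - 1 + 1 = d by omega] at h1
  rw [← h1]
  exact esymZ_sp_full d h0 hr

lemma reflect_sp (d n : ℕ) (r : ℤ) :
    esymZ (sp d) n ((n : ℤ) - r) =
      (if n % 2 = 1 then omC d ^ ((n + 1) / 2) else 1) * esymZ (sm d) n r := by
  rw [← prod_sp d n]
  exact esymZ_reflect (sp d) (sm d) n (fun m _ => sp_mul_sm d m) r

/-- `k` even: `F k r = E k (k - r)`. -/
lemma T1 (d k : ℕ) (hk : k % 2 = 0) (r : ℤ) :
    esymZ (sm d) k r = esymZ (sp d) k ((k : ℤ) - r) := by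
  rw [reflect_sp d k r, if_neg (by omega), one_mul]

/-- `k` odd: `ω^{(k+1)/2} * F k r = E k (k - r)`. -/
lemma T2 (d k : ℕ) (hk : k % 2 = 1) (r : ℤ) :
    omC d ^ ((k + 1) / 2) * esymZ (sm d) k r = esymZ (sp d) k ((k : ℤ) - r) := by
  rw [reflect_sp d k r, if_pos hk]

/-- `k` odd: `F k r - F (k+1) r = - E k (k + 1 - r)`. -/
lemma T3 (d k : ℕ) (hk : k % 2 = 1) (r : ℤ) :
    esymZ (sm d) k r - esymZ (sm d) (k + 1) r = - esymZ (sp d) k ((k : ℤ) + 1 - r) := by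
  have h1 := esymZ_succ (sm d) k r
  have h2 : sm d (k + 1) = omC d ^ ((k + 1) / 2) := by
    unfold sm
    rw [if_neg (by omega), show (k + 1) / 2 = (k+1)/2 from rfl]
  have h3 := T2 d k hk (r - 1)
  rw [show (k : ℤ) - (r - 1) = (k : ℤ) + 1 - r by ring] at h3
  rw [h1, h2]
  linear_combination -h3

/-- recurrence for `sp` at an odd index `k+1 = 2b+1`. -/
lemma T5 (d k : ℕ) (r : ℤ) :
    esymZ (sp d) (k + 1) r = esymZ (sp d) k r + sp d (k + 1) * esymZ (sp d) k (r - 1) :=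
  esymZ_succ (sp d) k r

lemma neg_one_pow_two_mul_add (t x : ℕ) : (-1 : ℂ) ^ (2 * t + x) = (-1) ^ x := by
  rw [pow_add, pow_mul]
  norm_num

noncomputable def rp (d i k : ℕ) : ℂ :=
  (-1 : ℂ) ^ (1 + (i + 1) / 2 + (k + 2) / 2) *
    (if i % 2 = 0 then
      esymZ (sp d) k ((((k + 1) / 2 : ℕ) : ℤ) + (((i / 2 : ℕ)) : ℤ))
    else
      esymZ (sp d) k ((((k + 1) / 2 : ℕ) : ℤ) - ((((i + 1) / 2 : ℕ)) : ℤ)))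

noncomputable def rm (d i k : ℕ) : ℂ :=
  (-1 : ℂ) ^ ((i + 1) / 2 + (k + 1) / 2) *
    (if i % 2 = 0 then
      esymZ (sm d) k ((((k + 1) / 2 : ℕ) : ℤ) + (((i / 2 : ℕ)) : ℤ))
    else
      esymZ (sm d) k ((((k + 1) / 2 : ℕ) : ℤ) - ((((i + 1) / 2 : ℕ)) : ℤ)))

lemma Rp_apply (d : ℕ) (i j : Fin d) : Rp d i j = rp d (i : ℕ) (j : ℕ) := rfl

lemma Rm_apply (d : ℕ) (i j : Fin d) : Rm d i j = rm d (i : ℕ) (j : ℕ) := rfl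

lemma sum_ind_left (d : ℕ) (v : Fin d → ℂ) {t : ℕ} (ht : t < d) :
    ∑ j : Fin d, (if (j : ℕ) = t then (1 : ℂ) else 0) * v j = v ⟨t, ht⟩ := by
  rw [Finset.sum_eq_single (⟨t, ht⟩ : Fin d)]
  · rw [if_pos rfl, one_mul]
  · intro j _ hj
    rw [if_neg (fun h => hj (Fin.ext h)), zero_mul]
  · intro h
    exact absurd (Finset.mem_univ _) h

lemma sum_ind_left_ge (d : ℕ) (v : Fin d → ℂ) {t : ℕ} (ht : d ≤ t) :
    ∑ j : Fin d, (if (j : ℕ) = t then (1 : ℂ) else 0) * v j = 0 := by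
  refine Finset.sum_eq_zero fun j _ => ?_
  rw [if_neg (by have := j.isLt; omega), zero_mul]

lemma sum_ind_right (d : ℕ) (v : Fin d → ℂ) (lam : ℂ) {t : ℕ} (ht : t < d) :
    ∑ j : Fin d, v j * (if (j : ℕ) = t then lam else 0) = v ⟨t, ht⟩ * lam := by
  rw [Finset.sum_eq_single (⟨t, ht⟩ : Fin d)]
  · rw [if_pos rfl]
  · intro j _ hj
    rw [if_neg (fun h => hj (Fin.ext h)), mul_zero]
  · intro h
    exact absurd (Finset.mem_univ _) h

lemma sum_ind_right_ge (d : ℕ) (v : Fin d → ℂ) (lam : ℂ) {t : ℕ} (ht : d ≤ t) :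
    ∑ j : Fin d, v j * (if (j : ℕ) = t then lam else 0) = 0 := by
  refine Finset.sum_eq_zero fun j _ => ?_
  rw [if_neg (by have := j.isLt; omega), mul_zero]

lemma sum_decomp (d : ℕ) (hd : 1 ≤ d) (A B : Matrix (Fin d) (Fin d) ℂ) (i k : Fin d)
    (T : ℕ) (c : Prop) [Decidable c]
    (hS : ∀ j : Fin d, A i j = (if (j : ℕ) = T then (1 : ℂ) else 0)
      - (if c then (if (j : ℕ) = d - 1 then (1 : ℂ) else 0) else 0)) :
    (A * B) i k = (if hT : T < d then B ⟨T, hT⟩ k else 0)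
      - (if c then B ⟨d - 1, by omega⟩ k else 0) := by
  rw [Matrix.mul_apply]
  have step : ∀ j : Fin d, A i j * B j k =
      (if (j : ℕ) = T then (1 : ℂ) else 0) * B j k
      - (if c then (if (j : ℕ) = d - 1 then (1 : ℂ) else 0) * B j k else 0) := by
    intro j
    rw [hS j, sub_mul]
    congr 1
    split_ifs <;> ring
  rw [Finset.sum_congr rfl fun j _ => step j, Finset.sum_sub_distrib]
  congr 1
  · by_cases hT : T < d
    · rw [dif_pos hT, sum_ind_left d _ hT]
    · rw [dif_neg hT, sum_ind_left_ge d _ (by omega)]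
  · by_cases hc : c
    · have h1 : ∀ j : Fin d, (if c then (if (j : ℕ) = d - 1 then (1 : ℂ) else 0) * B j k else 0)
          = (if (j : ℕ) = d - 1 then (1 : ℂ) else 0) * B j k := fun j => if_pos hc
      rw [Finset.sum_congr rfl fun j _ => h1 j, sum_ind_left d _ (by omega : d - 1 < d), if_pos hc]
    · have h1 : ∀ j : Fin d, (if c then (if (j : ℕ) = d - 1 then (1 : ℂ) else 0) * B j k else 0)
          = 0 := fun j => if_neg hc
      rw [Finset.sum_congr rfl fun j _ => h1 j, Finset.sum_const_zero, if_neg hc]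

lemma sum_decomp_right (d : ℕ) (A B : Matrix (Fin d) (Fin d) ℂ) (i k : Fin d)
    (lam : ℂ) (T : ℕ)
    (hS : ∀ j : Fin d, B j k = (if (j : ℕ) = (k : ℕ) then lam else 0)
      - (if (j : ℕ) = T then (1 : ℂ) else 0)) :
    (A * B) i k = A i k * lam - (if hT : T < d then A i ⟨T, hT⟩ else 0) := by
  rw [Matrix.mul_apply]
  have step : ∀ j : Fin d, A i j * B j k =
      A i j * (if (j : ℕ) = (k : ℕ) then lam else 0)
      - A i j * (if (j : ℕ) = T then (1 : ℂ) else 0) := by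
    intro j
    rw [hS j, mul_sub]
  rw [Finset.sum_congr rfl fun j _ => step j, Finset.sum_sub_distrib]
  congr 1
  · rw [sum_ind_right d _ lam k.isLt]
  · by_cases hT : T < d
    · rw [dif_pos hT, sum_ind_right d _ 1 hT, mul_one]
    · rw [dif_neg hT, sum_ind_right_ge d _ 1 (by omega)]

lemma mulA3 (d : ℕ) (hd : 2 ≤ d) (i k : Fin d) :
    (A3 d * Rp d) i k =
      (if (i : ℕ) = 0 then rp d 0 (k : ℕ)
        else if (i : ℕ) % 2 = 1 then
          (if (i : ℕ) + 1 < d then rp d ((i : ℕ) + 1) (k : ℕ) else 0)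
        else rp d ((i : ℕ) - 1) (k : ℕ))
      - (if d % 2 = 0 then rp d (d - 1) (k : ℕ) else 0) := by
  have hi := i.isLt
  have hB : ∀ (t : ℕ) (ht : t < d), Rp d ⟨t, ht⟩ k = rp d t (k : ℕ) := fun t ht => rfl
  set T : ℕ := if (i : ℕ) = 0 then 0 else if (i : ℕ) % 2 = 1 then (i : ℕ) + 1
    else (i : ℕ) - 1 with hT
  have hS : ∀ j : Fin d, A3 d i j = (if (j : ℕ) = T then (1 : ℂ) else 0)
      - (if d % 2 = 0 then (if (j : ℕ) = d - 1 then (1 : ℂ) else 0) else 0) := by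
    intro j
    have hj := j.isLt
    simp only [A3, Matrix.of_apply, hT]
    congr 1
    · split_ifs <;> first | rfl | (exfalso; omega)
    · split_ifs <;> first | rfl | (exfalso; omega)
  rw [sum_decomp d (by omega) _ _ i k T (d % 2 = 0) hS]
  congr 1
  · by_cases h0 : (i : ℕ) = 0
    · have hT0 : T = 0 := by rw [hT, if_pos h0]
      rw [hT0, dif_pos (show 0 < d by omega), hB, if_pos h0]
    · by_cases h1 : (i : ℕ) % 2 = 1
      · have hT1 : T = (i : ℕ) + 1 := by rw [hT, if_neg h0, if_pos h1]
        rw [hT1, if_neg h0, if_pos h1]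
        by_cases h2 : (i : ℕ) + 1 < d
        · rw [dif_pos h2, hB, if_pos h2]
        · rw [dif_neg h2, if_neg h2]
      · have hT2 : T = (i : ℕ) - 1 := by rw [hT, if_neg h0, if_neg h1]
        rw [hT2, dif_pos (show (i : ℕ) - 1 < d by omega), hB, if_neg h0, if_neg h1]

lemma mulA2 (d : ℕ) (hd : 2 ≤ d) (i k : Fin d) :
    (A2 d * Rm d) i k =
      (if (i : ℕ) % 2 = 0 then
          (if (i : ℕ) + 1 < d then rm d ((i : ℕ) + 1) (k : ℕ) else 0)
        else rm d ((i : ℕ) - 1) (k : ℕ))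
      - (if d % 2 = 1 then rm d (d - 1) (k : ℕ) else 0) := by
  have hi := i.isLt
  have hB : ∀ (t : ℕ) (ht : t < d), Rm d ⟨t, ht⟩ k = rm d t (k : ℕ) := fun t ht => rfl
  set T : ℕ := if (i : ℕ) % 2 = 0 then (i : ℕ) + 1 else (i : ℕ) - 1 with hT
  have hS : ∀ j : Fin d, A2 d i j = (if (j : ℕ) = T then (1 : ℂ) else 0)
      - (if d % 2 = 1 then (if (j : ℕ) = d - 1 then (1 : ℂ) else 0) else 0) := by
    intro j
    have hj := j.isLt
    simp only [A2, Matrix.of_apply, hT]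
    congr 1
    · split_ifs <;> first | rfl | (exfalso; omega)
    · split_ifs <;> first | rfl | (exfalso; omega)
  rw [sum_decomp d (by omega) _ _ i k T (d % 2 = 1) hS]
  congr 1
  · by_cases h1 : (i : ℕ) % 2 = 0
    · have hT1 : T = (i : ℕ) + 1 := by rw [hT, if_pos h1]
      rw [hT1, if_pos h1]
      by_cases h2 : (i : ℕ) + 1 < d
      · rw [dif_pos h2, hB, if_pos h2]
      · rw [dif_neg h2, if_neg h2]
    · have hT2 : T = (i : ℕ) - 1 := by rw [hT, if_neg h1]
      rw [hT2, dif_pos (show (i : ℕ) - 1 < d by omega), hB, if_neg h1]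

lemma mulG1 (d : ℕ) (hd : 2 ≤ d) (i k : Fin d) :
    (Rm d * G1 d) i k = rm d (i : ℕ) (k : ℕ)
      - (if (k : ℕ) % 2 = 1 ∧ (k : ℕ) + 1 < d then rm d (i : ℕ) ((k : ℕ) + 1) else 0) := by
  have hk := k.isLt
  have hB : ∀ (t : ℕ) (ht : t < d), Rm d i ⟨t, ht⟩ = rm d (i : ℕ) t := fun t ht => rfl
  set T : ℕ := if (k : ℕ) % 2 = 1 then (k : ℕ) + 1 else d with hT
  have hS : ∀ j : Fin d, G1 d j k = (if (j : ℕ) = (k : ℕ) then (1 : ℂ) else 0)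
      - (if (j : ℕ) = T then (1 : ℂ) else 0) := by
    intro j
    have hj := j.isLt
    simp only [G1, Matrix.of_apply, Fin.ext_iff, hT]
    by_cases h1 : (k : ℕ) % 2 = 1 <;>
      simp only [h1, if_true, if_false, ite_true, ite_false] <;>
      congr 1 <;> split_ifs <;> first | rfl | (exfalso; omega)
  rw [sum_decomp_right d _ _ i k 1 T hS, mul_one, Rm_apply]
  congr 1
  by_cases h1 : (k : ℕ) % 2 = 1
  · have hT1 : T = (k : ℕ) + 1 := by rw [hT, if_pos h1]
    rw [hT1]
    by_cases h2 : (k : ℕ) + 1 < d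
    · rw [dif_pos h2, hB, if_pos ⟨h1, h2⟩]
    · rw [dif_neg h2, if_neg (by tauto)]
  · have hT2 : T = d := by rw [hT, if_neg h1]
    rw [hT2, dif_neg (by omega), if_neg (by tauto)]

lemma mulG2 (d : ℕ) (hd : 2 ≤ d) (i k : Fin d) :
    (Rp d * G2 d) i k = rp d (i : ℕ) (k : ℕ) *
        (if (k : ℕ) % 2 = 0 then omC d ^ ((k : ℕ) / 2 + 1)
          else (omC d ^ (((k : ℕ) + 1) / 2))⁻¹)
      - (if (k : ℕ) % 2 = 0 ∧ (k : ℕ) + 1 < d then rp d (i : ℕ) ((k : ℕ) + 1) else 0) := by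
  have hk := k.isLt
  have hB : ∀ (t : ℕ) (ht : t < d), Rp d i ⟨t, ht⟩ = rp d (i : ℕ) t := fun t ht => rfl
  set lam : ℂ := if (k : ℕ) % 2 = 0 then omC d ^ ((k : ℕ) / 2 + 1)
    else (omC d ^ (((k : ℕ) + 1) / 2))⁻¹ with hlam
  set T : ℕ := if (k : ℕ) % 2 = 0 then (k : ℕ) + 1 else d with hT
  have hS : ∀ j : Fin d, G2 d j k = (if (j : ℕ) = (k : ℕ) then lam else 0)
      - (if (j : ℕ) = T then (1 : ℂ) else 0) := by
    intro j
    have hj := j.isLt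
    simp only [G2, Matrix.of_apply, Fin.ext_iff, hT, hlam]
    by_cases h1 : (k : ℕ) % 2 = 0 <;>
      simp only [h1, if_true, if_false, ite_true, ite_false] <;>
      congr 1 <;> split_ifs <;>
      first
        | rfl
        | (exfalso; omega)
        | (congr 1 <;> omega)
        | (congr 2 <;> omega)
  rw [sum_decomp_right d _ _ i k lam T hS, Rp_apply]
  congr 1
  by_cases h1 : (k : ℕ) % 2 = 0
  · have hT1 : T = (k : ℕ) + 1 := by rw [hT, if_pos h1]
    rw [hT1]
    by_cases h2 : (k : ℕ) + 1 < d
    · rw [dif_pos h2, hB, if_pos ⟨h1, h2⟩]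
    · rw [dif_neg h2, if_neg (by tauto)]
  · have hT2 : T = d := by rw [hT, if_neg h1]
    rw [hT2, dif_neg (by omega), if_neg (by tauto)]

lemma rp_ee (d t b : ℕ) :
    rp d (2 * t) (2 * b) = (-1 : ℂ) ^ (t + b) * esymZ (sp d) (2 * b) ((b : ℤ) + t) := by
  unfold rp
  rw [if_pos (by omega : 2 * t % 2 = 0), show (2 * t + 1) / 2 = t by omega,
    show (2 * b + 2) / 2 = b + 1 by omega, show (2 * b + 1) / 2 = b by omega,
    show 2 * t / 2 = t by omega, show 1 + t + (b + 1) = 2 * 1 + (t + b) by omega,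
    neg_one_pow_two_mul_add]

lemma rp_eo (d t b : ℕ) :
    rp d (2 * t) (2 * b + 1) =
      (-1 : ℂ) ^ (t + b) * esymZ (sp d) (2 * b + 1) ((b : ℤ) + 1 + t) := by
  unfold rp
  rw [if_pos (by omega : 2 * t % 2 = 0), show (2 * t + 1) / 2 = t by omega,
    show (2 * b + 1 + 2) / 2 = b + 1 by omega, show (2 * b + 1 + 1) / 2 = b + 1 by omega,
    show 2 * t / 2 = t by omega, show 1 + t + (b + 1) = 2 * 1 + (t + b) by omega,
    neg_one_pow_two_mul_add, show (((b + 1 : ℕ)) : ℤ) + ((t : ℕ) : ℤ) = (b : ℤ) + 1 + t by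
      push_cast; ring]

lemma rp_oe (d t b : ℕ) :
    rp d (2 * t + 1) (2 * b) =
      (-1 : ℂ) ^ (t + b + 1) * esymZ (sp d) (2 * b) ((b : ℤ) - t - 1) := by
  unfold rp
  rw [if_neg (by omega : ¬(2 * t + 1) % 2 = 0), show (2 * t + 1 + 1) / 2 = t + 1 by omega,
    show (2 * b + 2) / 2 = b + 1 by omega, show (2 * b + 1) / 2 = b by omega,
    show 1 + (t + 1) + (b + 1) = 2 * 1 + (t + b + 1) by omega, neg_one_pow_two_mul_add,
    show ((b : ℕ) : ℤ) - ((t + 1 : ℕ) : ℤ) = (b : ℤ) - t - 1 by push_cast; ring]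

lemma rp_oo (d t b : ℕ) :
    rp d (2 * t + 1) (2 * b + 1) =
      (-1 : ℂ) ^ (t + b + 1) * esymZ (sp d) (2 * b + 1) ((b : ℤ) - t) := by
  unfold rp
  rw [if_neg (by omega : ¬(2 * t + 1) % 2 = 0), show (2 * t + 1 + 1) / 2 = t + 1 by omega,
    show (2 * b + 1 + 2) / 2 = b + 1 by omega, show (2 * b + 1 + 1) / 2 = b + 1 by omega,
    show 1 + (t + 1) + (b + 1) = 2 * 1 + (t + b + 1) by omega, neg_one_pow_two_mul_add,
    show ((b + 1 : ℕ) : ℤ) - ((t + 1 : ℕ) : ℤ) = (b : ℤ) - t by push_cast; ring]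

lemma rm_ee (d t b : ℕ) :
    rm d (2 * t) (2 * b) = (-1 : ℂ) ^ (t + b) * esymZ (sm d) (2 * b) ((b : ℤ) + t) := by
  unfold rm
  rw [if_pos (by omega : 2 * t % 2 = 0), show (2 * t + 1) / 2 = t by omega,
    show (2 * b + 1) / 2 = b by omega, show 2 * t / 2 = t by omega]

lemma rm_eo (d t b : ℕ) :
    rm d (2 * t) (2 * b + 1) =
      (-1 : ℂ) ^ (t + b + 1) * esymZ (sm d) (2 * b + 1) ((b : ℤ) + 1 + t) := by
  unfold rm
  rw [if_pos (by omega : 2 * t % 2 = 0), show (2 * t + 1) / 2 = t by omega,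
    show (2 * b + 1 + 1) / 2 = b + 1 by omega, show 2 * t / 2 = t by omega,
    show t + (b + 1) = t + b + 1 by omega,
    show (((b + 1 : ℕ)) : ℤ) + ((t : ℕ) : ℤ) = (b : ℤ) + 1 + t by push_cast; ring]

lemma rm_oe (d t b : ℕ) :
    rm d (2 * t + 1) (2 * b) =
      (-1 : ℂ) ^ (t + b + 1) * esymZ (sm d) (2 * b) ((b : ℤ) - t - 1) := by
  unfold rm
  rw [if_neg (by omega : ¬(2 * t + 1) % 2 = 0), show (2 * t + 1 + 1) / 2 = t + 1 by omega,
    show (2 * b + 1) / 2 = b by omega, show t + 1 + b = t + b + 1 by omega,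
    show ((b : ℕ) : ℤ) - ((t + 1 : ℕ) : ℤ) = (b : ℤ) - t - 1 by push_cast; ring]

lemma rm_oo (d t b : ℕ) :
    rm d (2 * t + 1) (2 * b + 1) =
      (-1 : ℂ) ^ (t + b) * esymZ (sm d) (2 * b + 1) ((b : ℤ) - t) := by
  unfold rm
  rw [if_neg (by omega : ¬(2 * t + 1) % 2 = 0), show (2 * t + 1 + 1) / 2 = t + 1 by omega,
    show (2 * b + 1 + 1) / 2 = b + 1 by omega,
    show t + 1 + (b + 1) = 2 * 1 + (t + b) by omega, neg_one_pow_two_mul_add,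
    show ((b + 1 : ℕ) : ℤ) - ((t + 1 : ℕ) : ℤ) = (b : ℤ) - t by push_cast; ring]

lemma sgn_eq (r e : ℕ) (h : r % 2 = e % 2) : (-1 : ℂ) ^ r = (-1) ^ e := by
  rcases Nat.even_or_odd r with hr | hr
  · have hr' : r % 2 = 0 := Nat.even_iff.1 hr
    rw [hr.neg_one_pow, (Nat.even_iff.2 (by omega) : Even e).neg_one_pow]
  · have hr' : r % 2 = 1 := Nat.odd_iff.1 hr
    rw [hr.neg_one_pow, (Nat.odd_iff.2 (by omega) : Odd e).neg_one_pow]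

lemma sgn_or (p : ℕ) : (-1 : ℂ) ^ p = 1 ∨ (-1 : ℂ) ^ p = -1 := by
  rcases Nat.even_or_odd p with h | h
  · exact Or.inl h.neg_one_pow
  · exact Or.inr h.neg_one_pow

lemma scalar1 (d : ℕ) (hd : 2 ≤ d) (i k : ℕ) (hi : i < d) (hk : k < d) :
    (if i = 0 then rp d 0 k
      else if i % 2 = 1 then (if i + 1 < d then rp d (i + 1) k else 0)
      else rp d (i - 1) k)
    - (if d % 2 = 0 then rp d (d - 1) k else 0)
    = rm d i k - (if k % 2 = 1 ∧ k + 1 < d then rm d i (k + 1) else 0) := by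
  obtain ⟨b, hb | hb⟩ : ∃ b, k = 2 * b ∨ k = 2 * b + 1 := ⟨k / 2, by omega⟩
  · -- k even
    subst hb
    rw [if_neg (show ¬(2 * b % 2 = 1 ∧ 2 * b + 1 < d) by omega), sub_zero]
    have hcorr : (if d % 2 = 0 then rp d (d - 1) (2 * b) else 0) = 0 := by
      by_cases hpar : d % 2 = 0
      · obtain ⟨e, he⟩ : ∃ e, d = 2 * e := ⟨d / 2, by omega⟩
        rw [if_pos hpar, show d - 1 = 2 * (e - 1) + 1 by omega, rp_oe,
          esymZ_neg _ _ (show (b : ℤ) - ((e - 1 : ℕ) : ℤ) - 1 < 0 by omega), mul_zero]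
      · rw [if_neg hpar]
    rw [hcorr, sub_zero]
    have hT1' : ∀ x y : ℤ, x + y = 2 * (b : ℤ) →
        esymZ (sm d) (2 * b) x = esymZ (sp d) (2 * b) y := by
      intro x y hxy
      rw [T1 d (2 * b) (by omega) x]
      congr 1
      omega
    obtain ⟨t, ht | ht⟩ : ∃ t, i = 2 * t ∨ i = 2 * t + 1 := ⟨i / 2, by omega⟩
    · subst ht
      rw [rm_ee]
      by_cases h0 : 2 * t = 0
      · have ht0 : t = 0 := by omega
        subst ht0
        rw [if_pos h0]
        have e0 : rp d 0 (2 * b) =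
            (-1 : ℂ) ^ (0 + b) * esymZ (sp d) (2 * b) ((b : ℤ) + ((0 : ℕ) : ℤ)) := rp_ee d 0 b
        rw [e0, hT1' ((b : ℤ) + ((0 : ℕ) : ℤ)) ((b : ℤ) + ((0 : ℕ) : ℤ)) (by push_cast; ring)]
      · rw [if_neg (by omega), if_neg (by omega : ¬2 * t % 2 = 1),
          show 2 * t - 1 = 2 * (t - 1) + 1 by omega, rp_oe,
          hT1' ((b : ℤ) + (t : ℤ)) ((b : ℤ) - ((t - 1 : ℕ) : ℤ) - 1) (by omega),
          show t - 1 + b + 1 = t + b by omega]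
    · subst ht
      rw [if_neg (by omega), if_pos (by omega : (2 * t + 1) % 2 = 1), rm_oe]
      by_cases h2 : 2 * t + 1 + 1 < d
      · rw [if_pos h2, show 2 * t + 1 + 1 = 2 * (t + 1) by ring, rp_ee,
          hT1' ((b : ℤ) - (t : ℤ) - 1) ((b : ℤ) + ((t + 1 : ℕ) : ℤ)) (by omega),
          show t + 1 + b = t + b + 1 by omega]
      · rw [if_neg h2, esymZ_neg _ _ (show (b : ℤ) - (t : ℤ) - 1 < 0 by omega), mul_zero]
  · -- k odd
    subst hb
    have hcorr : (if d % 2 = 0 then rp d (d - 1) (2 * b + 1) else 0)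
        = (if 2 * b + 2 = d then -1 else 0) := by
      by_cases hpar : d % 2 = 0
      · obtain ⟨e, he⟩ : ∃ e, d = 2 * e := ⟨d / 2, by omega⟩
        rw [if_pos hpar, show d - 1 = 2 * (e - 1) + 1 by omega, rp_oo]
        by_cases hbd : 2 * b + 2 = d
        · rw [if_pos hbd, show (b : ℤ) - ((e - 1 : ℕ) : ℤ) = 0 by omega, esymZ_zero, mul_one,
            show e - 1 + b + 1 = 2 * b + 1 by omega,
            show 2 * b + 1 = 2 * b + 1 from rfl, neg_one_pow_two_mul_add, pow_one]
        · rw [if_neg hbd, esymZ_neg _ _ (show (b : ℤ) - ((e - 1 : ℕ) : ℤ) < 0 by omega),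
            mul_zero]
      · rw [if_neg hpar, if_neg (by omega)]
    rw [hcorr]
    have hT2' : ∀ x y : ℤ, x + y = 2 * (b : ℤ) + 1 →
        esymZ (sm d) (2 * b + 1) x = (omC d ^ (b + 1))⁻¹ * esymZ (sp d) (2 * b + 1) y := by
      intro x y hxy
      have h := T2 d (2 * b + 1) (by omega) x
      rw [show (2 * b + 1 + 1) / 2 = b + 1 by omega,
        show ((2 * b + 1 : ℕ) : ℤ) - x = y by push_cast; omega] at h
      rw [eq_inv_mul_iff_mul_eq₀ (pow_ne_zero _ (omC_ne_zero d))]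
      exact h
    have hT3' : ∀ x y : ℤ, x + y = 2 * (b : ℤ) + 2 →
        esymZ (sm d) (2 * b + 1) x - esymZ (sm d) (2 * (b + 1)) x
          = - esymZ (sp d) (2 * b + 1) y := by
      intro x y hxy
      have h := T3 d (2 * b + 1) (by omega) x
      rw [show 2 * b + 1 + 1 = 2 * (b + 1) by ring,
        show ((2 * b + 1 : ℕ) : ℤ) + 1 - x = y by push_cast; omega] at h
      exact h
    by_cases h2 : 2 * b + 1 + 1 < d
    · -- k + 1 < d
      rw [if_pos (show (2 * b + 1) % 2 = 1 ∧ 2 * b + 1 + 1 < d from ⟨by omega, h2⟩),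
        if_neg (show ¬2 * b + 2 = d by omega), sub_zero]
      obtain ⟨t, ht | ht⟩ : ∃ t, i = 2 * t ∨ i = 2 * t + 1 := ⟨i / 2, by omega⟩
      · subst ht
        rw [rm_eo, show 2 * b + 1 + 1 = 2 * (b + 1) by ring, rm_ee,
          show ((b + 1 : ℕ) : ℤ) + (t : ℤ) = (b : ℤ) + 1 + t by push_cast; ring]
        by_cases h0 : 2 * t = 0
        · have ht0 : t = 0 := by omega
          subst ht0
          rw [if_pos h0]
          have e0 : rp d 0 (2 * b + 1) =
              (-1 : ℂ) ^ (0 + b) *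
                esymZ (sp d) (2 * b + 1) ((b : ℤ) + 1 + ((0 : ℕ) : ℤ)) := rp_eo d 0 b
          rw [e0]
          have h3 := hT3' ((b : ℤ) + 1 + ((0 : ℕ) : ℤ)) ((b : ℤ) + 1 + ((0 : ℕ) : ℤ))
            (by push_cast; ring)
          linear_combination ((-1 : ℂ) ^ (0 + b)) * h3
        · rw [if_neg (by omega), if_neg (by omega : ¬2 * t % 2 = 1),
            show 2 * t - 1 = 2 * (t - 1) + 1 by omega, rp_oo,
            show t - 1 + b + 1 = t + b by omega]
          have h3 := hT3' ((b : ℤ) + 1 + (t : ℤ)) ((b : ℤ) - ((t - 1 : ℕ) : ℤ)) (by omega)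
          linear_combination ((-1 : ℂ) ^ (t + b)) * h3
      · subst ht
        rw [if_neg (by omega), if_pos (by omega : (2 * t + 1) % 2 = 1), rm_oo,
          show 2 * b + 1 + 1 = 2 * (b + 1) by ring, rm_oe,
          show ((b + 1 : ℕ) : ℤ) - (t : ℤ) - 1 = (b : ℤ) - t by push_cast; ring]
        by_cases h3' : 2 * t + 1 + 1 < d
        · rw [if_pos h3', show 2 * t + 1 + 1 = 2 * (t + 1) by ring, rp_eo]
          have h3 := hT3' ((b : ℤ) - (t : ℤ)) ((b : ℤ) + 1 + ((t + 1 : ℕ) : ℤ)) (by omega)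
          linear_combination (-((-1 : ℂ) ^ (t + b))) * h3
        · rw [if_neg h3', esymZ_neg (sm d) _ (show (b : ℤ) - (t : ℤ) < 0 by omega),
            esymZ_neg (sm d) _ (show (b : ℤ) - (t : ℤ) < 0 by omega), mul_zero, mul_zero]
          norm_num
    · -- k = d - 1, d even
      have hdb : d = 2 * b + 2 := by omega
      rw [if_neg (show ¬((2 * b + 1) % 2 = 1 ∧ 2 * b + 1 + 1 < d) from fun hcon => h2 hcon.2),
        sub_zero, if_pos (by omega : 2 * b + 2 = d)]
      have hsp : sp d d = (omC d ^ (b + 1))⁻¹ := by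
        unfold sp
        rw [if_neg (by omega), show d / 2 = b + 1 by omega]
      have hmaster : ∀ (y z : ℤ) (r e : ℕ), y = (r : ℤ) → z = y - 1 → r ≤ d →
          r % 2 = e % 2 →
          esymZ (sp d) (2 * b + 1) y + (omC d ^ (b + 1))⁻¹ * esymZ (sp d) (2 * b + 1) z
            = (-1 : ℂ) ^ e := by
        intro y z r e hy hz hr hre
        have hm := master_sp d (by omega) (r := (r : ℤ)) (by omega) (by omega)
        rw [Int.toNat_natCast, hsp, show d - 1 = 2 * b + 1 by omega, sgn_eq r e hre] at hm
        subst hy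
        subst hz
        exact hm
      obtain ⟨t, ht | ht⟩ : ∃ t, i = 2 * t ∨ i = 2 * t + 1 := ⟨i / 2, by omega⟩
      · subst ht
        rw [rm_eo]
        have h2' := hT2' ((b : ℤ) + 1 + (t : ℤ)) ((b : ℤ) - (t : ℤ)) (by omega)
        by_cases h0 : 2 * t = 0
        · have ht0 : t = 0 := by omega
          subst ht0
          rw [if_pos h0]
          have e0 : rp d 0 (2 * b + 1) =
              (-1 : ℂ) ^ (0 + b) *
                esymZ (sp d) (2 * b + 1) ((b : ℤ) + 1 + ((0 : ℕ) : ℤ)) := rp_eo d 0 b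
          rw [e0]
          have hm := hmaster ((b : ℤ) + 1 + ((0 : ℕ) : ℤ)) ((b : ℤ) - ((0 : ℕ) : ℤ)) (b + 1)
            (0 + b + 1) (by push_cast; ring) (by push_cast; ring) (by omega) (by omega)
          rw [show ((b : ℤ) + 1 + ((0 : ℕ) : ℤ)) = (b : ℤ) + 1 + (0 : ℕ) from rfl] at hm
          rw [h2']
          have h2'' : esymZ (sp d) (2 * b + 1) ((b : ℤ) - ((0 : ℕ) : ℤ))
              = esymZ (sp d) (2 * b + 1) ((b : ℤ) - (0 : ℕ)) := rfl
          rcases sgn_or (0 + b) with h | h <;>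
            (try simp only [pow_succ ((-1) : ℂ)] at hm ⊢) <;>
            (try rw [h] at hm) <;> (try rw [h]) <;>
            first
              | linear_combination hm
              | linear_combination -hm
        · rw [if_neg (by omega), if_neg (by omega : ¬2 * t % 2 = 1),
            show 2 * t - 1 = 2 * (t - 1) + 1 by omega, rp_oo,
            show t - 1 + b + 1 = t + b by omega]
          have hm := hmaster ((b : ℤ) - ((t - 1 : ℕ) : ℤ)) ((b : ℤ) - (t : ℤ)) (b + 1 - t)
            (t + b + 1) (by omega) (by omega) (by omega) (by omega)
          rw [h2']
          rcases sgn_or (t + b) with h | h <;>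
            (try simp only [pow_succ ((-1) : ℂ)] at hm ⊢) <;>
            (try rw [h] at hm) <;> (try rw [h]) <;>
            first
              | linear_combination hm
              | linear_combination -hm
      · subst ht
        rw [if_neg (by omega), if_pos (by omega : (2 * t + 1) % 2 = 1), rm_oo]
        by_cases h3' : 2 * t + 1 + 1 < d
        · rw [if_pos h3', show 2 * t + 1 + 1 = 2 * (t + 1) by ring, rp_eo]
          have h2' := hT2' ((b : ℤ) - (t : ℤ)) ((b : ℤ) + 1 + (t : ℤ)) (by omega)
          have hm := hmaster ((b : ℤ) + 1 + ((t + 1 : ℕ) : ℤ)) ((b : ℤ) + 1 + (t : ℤ))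
            (b + t + 2) (t + b) (by push_cast; ring) (by push_cast; ring) (by omega) (by omega)
          rw [h2', show t + 1 + b = t + b + 1 by omega]
          rcases sgn_or (t + b) with h | h <;>
            (try simp only [pow_succ ((-1) : ℂ)] at hm ⊢) <;>
            (try rw [h] at hm) <;> (try rw [h]) <;>
            first
              | linear_combination hm
              | linear_combination -hm
        · rw [if_neg h3']
          have htb : t = b := by omega
          subst htb
          rw [show (t : ℤ) - (t : ℤ) = 0 by ring, esymZ_zero, mul_one,
            show t + t = 2 * t + 0 by omega, neg_one_pow_two_mul_add, pow_zero]
          norm_num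

lemma scalar2 (d : ℕ) (hd : 2 ≤ d) (i k : ℕ) (hi : i < d) (hk : k < d) :
    (if i % 2 = 0 then (if i + 1 < d then rm d (i + 1) k else 0) else rm d (i - 1) k)
    - (if d % 2 = 1 then rm d (d - 1) k else 0)
    = rp d i k * (if k % 2 = 0 then omC d ^ (k / 2 + 1) else (omC d ^ ((k + 1) / 2))⁻¹)
      - (if k % 2 = 0 ∧ k + 1 < d then rp d i (k + 1) else 0) := by
  obtain ⟨b, hb | hb⟩ : ∃ b, k = 2 * b ∨ k = 2 * b + 1 := ⟨k / 2, by omega⟩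
  · -- k even
    subst hb
    rw [if_pos (by omega : 2 * b % 2 = 0), show 2 * b / 2 + 1 = b + 1 by omega]
    have hT1' : ∀ x y : ℤ, x + y = 2 * (b : ℤ) →
        esymZ (sm d) (2 * b) x = esymZ (sp d) (2 * b) y := by
      intro x y hxy
      rw [T1 d (2 * b) (by omega) x]
      congr 1
      omega
    have hsp1 : sp d (2 * b + 1) = omC d ^ (b + 1) := by
      unfold sp
      rw [if_pos (by omega), show (2 * b + 1 + 1) / 2 = b + 1 by omega]
    have hT5' : ∀ x y : ℤ, y = x - 1 →
        esymZ (sp d) (2 * b + 1) x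
          = esymZ (sp d) (2 * b) x + omC d ^ (b + 1) * esymZ (sp d) (2 * b) y := by
      intro x y hy
      subst hy
      have h := T5 d (2 * b) x
      rwa [hsp1] at h
    by_cases h2 : 2 * b + 1 < d
    · -- k + 1 < d
      rw [if_pos (show 2 * b % 2 = 0 ∧ 2 * b + 1 < d from ⟨by omega, h2⟩)]
      have hcorr : (if d % 2 = 1 then rm d (d - 1) (2 * b) else 0) = 0 := by
        by_cases hpar : d % 2 = 1
        · obtain ⟨A, hA⟩ : ∃ A, d = 2 * A + 1 := ⟨d / 2, by omega⟩
          rw [if_pos hpar, show d - 1 = 2 * A by omega, rm_ee,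
            esymZ_gt (sm d) (show ((2 * b : ℕ) : ℤ) < (b : ℤ) + (A : ℤ) by omega), mul_zero]
        · rw [if_neg hpar]
      rw [hcorr, sub_zero]
      obtain ⟨t, ht | ht⟩ : ∃ t, i = 2 * t ∨ i = 2 * t + 1 := ⟨i / 2, by omega⟩
      · subst ht
        rw [if_pos (by omega : 2 * t % 2 = 0), rp_ee, rp_eo]
        by_cases h3' : 2 * t + 1 < d
        · rw [if_pos h3', rm_oe,
            hT1' ((b : ℤ) - (t : ℤ) - 1) ((b : ℤ) + 1 + (t : ℤ)) (by omega),
            hT5' ((b : ℤ) + 1 + (t : ℤ)) ((b : ℤ) + (t : ℤ)) (by ring)]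
          ring
        · rw [if_neg h3',
            esymZ_gt (sp d) (show ((2 * b : ℕ) : ℤ) < (b : ℤ) + (t : ℤ) by omega),
            esymZ_gt (sp d) (show ((2 * b + 1 : ℕ) : ℤ) < (b : ℤ) + 1 + (t : ℤ) by omega)]
          ring
      · subst ht
        rw [if_neg (by omega : ¬(2 * t + 1) % 2 = 0), show 2 * t + 1 - 1 = 2 * t by omega,
          rm_ee, rp_oe, rp_oo,
          hT1' ((b : ℤ) + (t : ℤ)) ((b : ℤ) - (t : ℤ)) (by omega),
          hT5' ((b : ℤ) - (t : ℤ)) ((b : ℤ) - (t : ℤ) - 1) (by ring)]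
        ring
    · -- k = d - 1, d odd
      have hdb : d = 2 * b + 1 := by omega
      rw [if_neg (show ¬(2 * b % 2 = 0 ∧ 2 * b + 1 < d) from fun hc => h2 hc.2), sub_zero]
      have hsp : sp d d = omC d ^ (b + 1) := by
        unfold sp
        rw [if_pos (by omega), show (d + 1) / 2 = b + 1 by omega]
      have hmaster : ∀ (y z : ℤ) (r e : ℕ), y = (r : ℤ) → z = y - 1 → r ≤ d →
          r % 2 = e % 2 →
          esymZ (sp d) (2 * b) y + omC d ^ (b + 1) * esymZ (sp d) (2 * b) z
            = (-1 : ℂ) ^ e := by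
        intro y z r e hy hz hr hre
        have hm := master_sp d (by omega) (r := (r : ℤ)) (by omega) (by omega)
        rw [Int.toNat_natCast, hsp, show d - 1 = 2 * b by omega, sgn_eq r e hre] at hm
        subst hy
        subst hz
        exact hm
      have hcorr : (if d % 2 = 1 then rm d (d - 1) (2 * b) else 0) = 1 := by
        rw [if_pos (by omega), show d - 1 = 2 * b by omega, rm_ee,
          hT1' ((b : ℤ) + (b : ℤ)) 0 (by ring), esymZ_zero, mul_one,
          show b + b = 2 * b + 0 by omega, neg_one_pow_two_mul_add, pow_zero]
      rw [hcorr]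
      obtain ⟨t, ht | ht⟩ : ∃ t, i = 2 * t ∨ i = 2 * t + 1 := ⟨i / 2, by omega⟩
      · subst ht
        rw [if_pos (by omega : 2 * t % 2 = 0), rp_ee]
        by_cases h3' : 2 * t + 1 < d
        · rw [if_pos h3', rm_oe,
            hT1' ((b : ℤ) - (t : ℤ) - 1) ((b : ℤ) + (t : ℤ) + 1) (by omega)]
          have hm := hmaster ((b : ℤ) + (t : ℤ) + 1) ((b : ℤ) + (t : ℤ)) (b + t + 1)
            (t + b + 1) (by push_cast; ring) (by ring) (by omega) (by omega)
          rcases sgn_or (t + b) with h | h <;>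
            (try simp only [pow_succ ((-1) : ℂ)] at hm ⊢) <;>
            (try rw [h] at hm) <;> (try rw [h]) <;>
            first
              | linear_combination hm
              | linear_combination -hm
        · rw [if_neg h3']
          have htb : t = b := by omega
          subst htb
          have hm := hmaster ((t : ℤ) + (t : ℤ) + 1) ((t : ℤ) + (t : ℤ)) (2 * t + 1) 1
            (by push_cast; ring) (by ring) (by omega) (by omega)
          rw [esymZ_gt (sp d) (show ((2 * t : ℕ) : ℤ) < (t : ℤ) + (t : ℤ) + 1 by omega)] at hm
          rw [show (t : ℤ) + (t : ℤ) = (t : ℤ) + (t : ℤ) from rfl,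
            show t + t = 2 * t + 0 by omega, neg_one_pow_two_mul_add, pow_zero]
          have harg : ((t : ℕ) : ℤ) + ((t : ℕ) : ℤ) = ((t : ℕ) : ℤ) + (t : ℤ) := rfl
          linear_combination -hm
      · subst ht
        rw [if_neg (by omega : ¬(2 * t + 1) % 2 = 0), show 2 * t + 1 - 1 = 2 * t by omega,
          rm_ee, rp_oe,
          hT1' ((b : ℤ) + (t : ℤ)) ((b : ℤ) - (t : ℤ)) (by omega)]
        have hm := hmaster ((b : ℤ) - (t : ℤ)) ((b : ℤ) - (t : ℤ) - 1) (b - t)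
          (t + b) (by omega) (by ring) (by omega) (by omega)
        rcases sgn_or (t + b) with h | h <;>
          (try simp only [pow_succ ((-1) : ℂ)] at hm ⊢) <;>
          (try rw [h] at hm) <;> (try rw [h]) <;>
          first
            | linear_combination hm
            | linear_combination -hm
  · -- k odd
    subst hb
    rw [if_neg (by omega : ¬(2 * b + 1) % 2 = 0),
      if_neg (show ¬((2 * b + 1) % 2 = 0 ∧ 2 * b + 1 + 1 < d) by omega), sub_zero,
      show (2 * b + 1 + 1) / 2 = b + 1 by omega]
    have hcorr : (if d % 2 = 1 then rm d (d - 1) (2 * b + 1) else 0) = 0 := by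
      by_cases hpar : d % 2 = 1
      · obtain ⟨A, hA⟩ : ∃ A, d = 2 * A + 1 := ⟨d / 2, by omega⟩
        rw [if_pos hpar, show d - 1 = 2 * A by omega, rm_eo,
          esymZ_gt (sm d) (show ((2 * b + 1 : ℕ) : ℤ) < (b : ℤ) + 1 + (A : ℤ) by omega),
          mul_zero]
      · rw [if_neg hpar]
    rw [hcorr, sub_zero]
    have hT2' : ∀ x y : ℤ, x + y = 2 * (b : ℤ) + 1 →
        esymZ (sm d) (2 * b + 1) x = (omC d ^ (b + 1))⁻¹ * esymZ (sp d) (2 * b + 1) y := by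
      intro x y hxy
      have h := T2 d (2 * b + 1) (by omega) x
      rw [show (2 * b + 1 + 1) / 2 = b + 1 by omega,
        show ((2 * b + 1 : ℕ) : ℤ) - x = y by push_cast; omega] at h
      rw [eq_inv_mul_iff_mul_eq₀ (pow_ne_zero _ (omC_ne_zero d))]
      exact h
    obtain ⟨t, ht | ht⟩ : ∃ t, i = 2 * t ∨ i = 2 * t + 1 := ⟨i / 2, by omega⟩
    · subst ht
      rw [if_pos (by omega : 2 * t % 2 = 0), rp_eo]
      by_cases h3' : 2 * t + 1 < d
      · rw [if_pos h3', rm_oo,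
          hT2' ((b : ℤ) - (t : ℤ)) ((b : ℤ) + 1 + (t : ℤ)) (by omega)]
        ring
      · rw [if_neg h3',
          esymZ_gt (sp d) (show ((2 * b + 1 : ℕ) : ℤ) < (b : ℤ) + 1 + (t : ℤ) by omega)]
        ring
    · subst ht
      rw [if_neg (by omega : ¬(2 * t + 1) % 2 = 0), show 2 * t + 1 - 1 = 2 * t by omega,
        rm_eo, rp_oo,
        hT2' ((b : ℤ) + 1 + (t : ℤ)) ((b : ℤ) - (t : ℤ)) (by omega)]
      ring
/-- The jump relations `A₃ · R⁺ = R⁻ · G₁` and `A₂ · R⁻ = R⁺ · G₂`. -/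
theorem stmt12 (d : ℕ) (hd : 2 ≤ d) :
    A3 d * Rp d = Rm d * G1 d ∧ A2 d * Rm d = Rp d * G2 d := by
  constructor
  · ext i k
    rw [mulA3 d hd i k, mulG1 d hd i k]
    exact scalar1 d hd (i : ℕ) (k : ℕ) i.isLt k.isLt
  · ext i k
    rw [mulA2 d hd i k, mulG2 d hd i k]
    exact scalar2 d hd (i : ℕ) (k : ℕ) i.isLt k.isLt
end
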